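/- arXiv:1712.04630 — 6 statements merged into one kernel-verified Lean document; each statement's English description precedes it below -/
import Mathlib

section
/- Generalized Taylor expansion of the generalized Mittag-Leffler function (Section 4, Example 2): Let λ > 0, μ > 0, ν > 0, β > 0, m ∈ ℕ and z > 0. Then there exists ξ ∈ (0,z) such that E^{ν}_{λ,μ}(z^β) = Σ_{j=0}^{m} ((ν)_j / (Γ(λj+μ) · j!)) · z^{βj} + ((ν)_{m+1}/(m+1)!) · z^{β(m+1)} · E^{ν+m+1}_{λ, λ(m+1)+μ}(ξ^β). -/
open Real Filter Set

noncomputable def poch (ν : ℝ) (k : ℕ) : ℝ := ∏ i ∈ Finset.range k, (ν + (i : ℝ))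

noncomputable def mittagLeffler (lam mu nu : ℝ) (z : ℝ) : ℝ :=
  ∑' k : ℕ, poch nu k / (Real.Gamma (lam * (k : ℝ) + mu) * (k.factorial : ℝ)) * z ^ k

lemma gamma_lower_aux (l t : ℝ) (hl0 : 0 < l) (hl1 : l ≤ 1) (ht : 0 < t) :
    Real.Gamma (t + 1) ≤ Real.Gamma (t + l) * (t + l) ^ (1 - l) := by
  have hx : t + l ∈ Set.Ioi (0:ℝ) := by simp only [mem_Ioi]; linarith
  have hy : t + 1 + l ∈ Set.Ioi (0:ℝ) := by simp only [mem_Ioi]; linarith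
  have key := Real.convexOn_log_Gamma.2 hx hy hl0.le (by linarith : (0:ℝ) ≤ 1 - l) (by ring)
  have harg : l • (t+l) + (1-l) • (t+1+l) = t + 1 := by simp only [smul_eq_mul]; ring
  rw [harg] at key
  simp only [Function.comp_apply, smul_eq_mul] at key
  have htl : (0:ℝ) < t + l := by linarith
  have hG1 : Real.Gamma (t+1+l) = (t+l) * Real.Gamma (t+l) := by
    have := Real.Gamma_add_one (ne_of_gt htl)
    rw [show t+1+l = t+l+1 by ring, this]
  have hGpos : 0 < Real.Gamma (t+l) := Real.Gamma_pos_of_pos htl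
  have hG1pos : 0 < Real.Gamma (t+1) := Real.Gamma_pos_of_pos (by linarith)
  rw [hG1, Real.log_mul (ne_of_gt htl) (ne_of_gt hGpos)] at key
  have key2 : Real.log (Real.Gamma (t+1)) ≤ Real.log (Real.Gamma (t+l)) + (1-l) * Real.log (t+l) := by
    nlinarith [key]
  calc Real.Gamma (t+1) = Real.exp (Real.log (Real.Gamma (t+1))) := (Real.exp_log hG1pos).symm
    _ ≤ Real.exp (Real.log (Real.Gamma (t+l)) + (1-l) * Real.log (t+l)) := Real.exp_le_exp.2 key2
    _ = Real.Gamma (t+l) * (t+l) ^ (1-l) := by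
        rw [Real.exp_add, Real.exp_log hGpos, Real.rpow_def_of_pos htl, mul_comm (1-l)]

lemma gamma_ratio (lam t : ℝ) (hlam : 0 < lam) (ht : 2 ≤ t) :
    Real.Gamma t * t ^ (min lam 1) ≤ 2 * Real.Gamma (t + lam) := by
  set l := min lam 1 with hl
  have hl0 : 0 < l := lt_min hlam one_pos
  have hl1 : l ≤ 1 := min_le_right _ _
  have ht0 : (0:ℝ) < t := by linarith
  have htl : (0:ℝ) < t + l := by linarith
  have h1 : Real.Gamma (t + 1) ≤ Real.Gamma (t + l) * (t + l) ^ (1 - l) :=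
    gamma_lower_aux l t hl0 hl1 ht0
  have hmono : Real.Gamma (t + l) ≤ Real.Gamma (t + lam) :=
    Real.Gamma_strictMonoOn_Ici.monotoneOn (by simp only [mem_Ici]; linarith)
      (by simp only [mem_Ici]; linarith) (by linarith [min_le_left lam 1])
  have h2 : (t + l) ^ (1 - l) ≤ 2 * t ^ (1 - l) := by
    calc (t + l) ^ (1 - l) ≤ (2 * t) ^ (1 - l) :=
          Real.rpow_le_rpow htl.le (by linarith) (by linarith)
      _ = 2 ^ (1 - l) * t ^ (1 - l) := Real.mul_rpow (by norm_num) ht0.le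
      _ ≤ 2 * t ^ (1 - l) := by
          have : (2:ℝ) ^ (1 - l) ≤ 2 ^ (1:ℝ) :=
            Real.rpow_le_rpow_of_exponent_le (by norm_num) (by linarith)
          rw [Real.rpow_one] at this
          have := Real.rpow_nonneg ht0.le (1 - l)
          nlinarith
  have hGadd : Real.Gamma (t + 1) = t * Real.Gamma t := Real.Gamma_add_one (ne_of_gt ht0)
  have hGpos : 0 < Real.Gamma (t + lam) := Real.Gamma_pos_of_pos (by linarith)
  have hGtpos : 0 < Real.Gamma t := Real.Gamma_pos_of_pos ht0
  have h3 : t * Real.Gamma t ≤ Real.Gamma (t + lam) * (2 * t ^ (1 - l)) := by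
    rw [← hGadd]
    calc Real.Gamma (t + 1) ≤ Real.Gamma (t + l) * (t + l) ^ (1 - l) := h1
      _ ≤ Real.Gamma (t + lam) * (2 * t ^ (1 - l)) := by
          have hp : (0:ℝ) ≤ (t+l) ^ (1-l) := Real.rpow_nonneg htl.le _
          nlinarith [Real.Gamma_pos_of_pos htl]
  -- multiply by t^(l-1)
  have hkey : t ^ (1 - l) * t ^ (l - 1) = 1 := by
    rw [← Real.rpow_add ht0]; norm_num
  have hkey2 : t * t ^ (l - 1) = t ^ l := by
    nth_rewrite 1 [← Real.rpow_one t]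
    rw [← Real.rpow_add ht0]; norm_num
  have hmul := mul_le_mul_of_nonneg_right h3 (Real.rpow_nonneg ht0.le (l - 1))
  calc Real.Gamma t * t ^ l = t * Real.Gamma t * t ^ (l-1) := by
        rw [← hkey2]; ring
    _ ≤ Real.Gamma (t + lam) * (2 * t ^ (1-l)) * t ^ (l-1) := hmul
    _ = 2 * Real.Gamma (t + lam) := by
        rw [mul_assoc, mul_assoc, hkey]; ring

lemma poch_pos {ν : ℝ} (hν : 0 < ν) (k : ℕ) : 0 < poch ν k :=
  Finset.prod_pos fun i _ => by positivity

lemma poch_succ (ν : ℝ) (k : ℕ) : poch ν (k+1) = poch ν k * (ν + k) :=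
  Finset.prod_range_succ _ _

lemma poch_add (ν : ℝ) (a b : ℕ) : poch ν (a + b) = poch ν a * poch (ν + a) b := by
  unfold poch
  rw [Finset.prod_range_add]
  congr 1
  refine Finset.prod_congr rfl fun i _ => ?_
  push_cast; ring

noncomputable def mlTerm (lam mu nu : ℝ) (k : ℕ) : ℝ :=
  poch nu k / (Real.Gamma (lam * (k : ℝ) + mu) * (k.factorial : ℝ))

lemma mlTerm_pos {lam mu nu : ℝ} (hlam : 0 ≤ lam) (hmu : 0 < mu) (hnu : 0 < nu) (k : ℕ) :
    0 < mlTerm lam mu nu k := by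
  have : 0 < lam * (k:ℝ) + mu := by positivity
  have := Real.Gamma_pos_of_pos this
  have := poch_pos hnu k
  have : (0:ℝ) < k.factorial := by exact_mod_cast k.factorial_pos
  unfold mlTerm; positivity

lemma ml_summable {lam mu nu : ℝ} (hlam : 0 < lam) (hmu : 0 < mu) (hnu : 0 < nu)
    {x : ℝ} (hx : 0 ≤ x) :
    Summable (fun k : ℕ => mlTerm lam mu nu k * x ^ k) := by
  set l := min lam 1 with hl
  have hl0 : 0 < l := lt_min hlam one_pos
  set C : ℝ := max 1 (4 * (nu + 1) * x) with hC
  have hC1 : (1:ℝ) ≤ C := le_max_left _ _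
  have htend : Tendsto (fun k : ℕ => lam * (k:ℝ) + mu) atTop atTop :=
    (tendsto_natCast_atTop_atTop.const_mul_atTop hlam).atTop_add tendsto_const_nhds
  apply summable_of_ratio_norm_eventually_le (r := 1/2) (by norm_num)
  filter_upwards [htend.eventually_ge_atTop 2,
    htend.eventually_ge_atTop (C ^ (1/l))] with k h2 hCk
  set t : ℝ := lam * (k:ℝ) + mu with htdef
  have ht0 : 0 < t := by linarith
  have htl : t ^ l ≥ C := by
    calc C = (C ^ (1/l)) ^ l := by
          rw [← Real.rpow_mul (by linarith : (0:ℝ) ≤ C), one_div_mul_cancel hl0.ne',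
            Real.rpow_one]
      _ ≤ t ^ l := Real.rpow_le_rpow (Real.rpow_nonneg (by linarith) _) hCk hl0.le
  -- now the term ratio bound
  have hterm : mlTerm lam mu nu (k+1) * x ^ (k+1) ≤ 1/2 * (mlTerm lam mu nu k * x ^ k) := by
    have hGt : 0 < Real.Gamma t := Real.Gamma_pos_of_pos ht0
    have hGtl : 0 < Real.Gamma (t + lam) := Real.Gamma_pos_of_pos (by linarith)
    have hfac : (0:ℝ) < k.factorial := by exact_mod_cast k.factorial_pos
    have hpoch := poch_pos hnu k
    have hratio := gamma_ratio lam t hlam h2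
    have htlpos : 0 < t ^ l := lt_of_lt_of_le (by linarith) htl
    have hxk : (0:ℝ) ≤ x ^ k := pow_nonneg hx k
    have harg : lam * ((k:ℝ)+1) + mu = t + lam := by rw [htdef]; ring
    have hexp : mlTerm lam mu nu (k+1) * x ^ (k+1)
        = poch nu k * (nu + k) / (Real.Gamma (t+lam) * ((k+1) * k.factorial)) * (x ^ k * x) := by
      unfold mlTerm
      rw [poch_succ, Nat.factorial_succ, pow_succ]
      push_cast
      rw [harg]
    rw [hexp]
    have hexp2 : 1/2 * (mlTerm lam mu nu k * x ^ k)
        = poch nu k / (2 * (Real.Gamma t * k.factorial)) * x ^ k := by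
      unfold mlTerm; rw [htdef]; ring
    rw [hexp2]
    rw [div_mul_eq_mul_div, div_mul_eq_mul_div, div_le_div_iff₀ (by positivity) (by positivity)]
    have hk0 : (0:ℝ) ≤ (k:ℝ) := Nat.cast_nonneg k
    have hnuk : (nu + (k:ℝ)) * x * 4 ≤ t ^ l * ((k:ℝ)+1) := by
      have h2' : nu + (k:ℝ) ≤ (nu+1) * ((k:ℝ)+1) := by nlinarith
      have step1 : (nu + (k:ℝ)) * x * 4 ≤ ((nu+1) * ((k:ℝ)+1)) * x * 4 :=
        mul_le_mul_of_nonneg_right (mul_le_mul_of_nonneg_right h2' hx) (by norm_num)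
      have step3 : (4*(nu+1)*x) * ((k:ℝ)+1) ≤ C * ((k:ℝ)+1) :=
        mul_le_mul_of_nonneg_right (le_max_right _ _) (by linarith)
      have step4 : C * ((k:ℝ)+1) ≤ t^l * ((k:ℝ)+1) :=
        mul_le_mul_of_nonneg_right htl (by linarith)
      nlinarith [step1, step3, step4]
    have hcore : Real.Gamma t * ((nu + (k:ℝ)) * x * 2) ≤ Real.Gamma (t+lam) * ((k:ℝ)+1) := by
      have ha := mul_le_mul_of_nonneg_left hnuk hGt.le
      have hb := mul_le_mul_of_nonneg_right hratio (by linarith : (0:ℝ) ≤ (k:ℝ)+1)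
      nlinarith [ha, hb]
    have hP : (0:ℝ) ≤ poch nu k * x ^ k * (k.factorial : ℝ) :=
      mul_nonneg (mul_nonneg hpoch.le hxk) hfac.le
    calc poch nu k * (nu + (k:ℝ)) * (x ^ k * x) * (2 * (Real.Gamma t * (k.factorial:ℝ)))
        = (poch nu k * x ^ k * (k.factorial:ℝ)) * (Real.Gamma t * ((nu + (k:ℝ)) * x * 2)) := by ring
      _ ≤ (poch nu k * x ^ k * (k.factorial:ℝ)) * (Real.Gamma (t+lam) * ((k:ℝ)+1)) :=
          mul_le_mul_of_nonneg_left hcore hP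
      _ = poch nu k * x ^ k * (Real.Gamma (t+lam) * (((k:ℝ)+1) * (k.factorial:ℝ))) := by ring
  calc ‖mlTerm lam mu nu (k+1) * x ^ (k+1)‖ = mlTerm lam mu nu (k+1) * x ^ (k+1) := by
        rw [Real.norm_eq_abs, abs_of_nonneg]
        exact mul_nonneg (mlTerm_pos hlam.le hmu hnu _).le (pow_nonneg hx _)
    _ ≤ 1/2 * (mlTerm lam mu nu k * x ^ k) := hterm
    _ = 1/2 * ‖mlTerm lam mu nu k * x ^ k‖ := by
        rw [Real.norm_eq_abs, abs_of_nonneg]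
        exact mul_nonneg (mlTerm_pos hlam.le hmu hnu _).le (pow_nonneg hx _)

lemma ml_eq (lam mu nu y : ℝ) : mittagLeffler lam mu nu y = ∑' k : ℕ, mlTerm lam mu nu k * y ^ k := rfl

/-- Generalized Taylor expansion of the generalized Mittag-Leffler function
(Section 4, Example 2). -/
theorem mittagLeffler_taylor (lam mu nu β : ℝ) (m : ℕ) (z : ℝ)
    (hlam : 0 < lam) (hmu : 0 < mu) (hnu : 0 < nu) (hβ : 0 < β) (hz : 0 < z) :
    ∃ ξ ∈ Set.Ioo 0 z,
      mittagLeffler lam mu nu (z ^ β)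
        = (∑ j ∈ Finset.range (m + 1),
            poch nu j / (Real.Gamma (lam * (j : ℝ) + mu) * (j.factorial : ℝ)) *
              z ^ (β * (j : ℝ)))
          + poch nu (m + 1) / ((m + 1).factorial : ℝ) * z ^ (β * ((m : ℝ) + 1)) *
              mittagLeffler lam (lam * ((m : ℝ) + 1) + mu) (nu + (m : ℝ) + 1) (ξ ^ β) := by
  have hx : (0:ℝ) < z ^ β := Real.rpow_pos_of_pos hz β
  set x : ℝ := z ^ β with hxdef
  set mu' : ℝ := lam * ((m:ℝ)+1) + mu with hmu'def
  have hmu' : 0 < mu' := by positivity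
  set nu' : ℝ := nu + (m:ℝ) + 1 with hnu'def
  have hnu' : 0 < nu' := by positivity
  have hxm : z ^ (β * ((m:ℝ)+1)) = x ^ (m+1) := by
    rw [hxdef, ← Real.rpow_natCast (z ^ β) (m+1), ← Real.rpow_mul hz.le]
    push_cast; ring_nf
  set K : ℝ := poch nu (m + 1) / ((m + 1).factorial : ℝ) * z ^ (β * ((m:ℝ)+1)) with hKdef
  have hK : 0 < K := by
    have := poch_pos hnu (m+1)
    have : (0:ℝ) < (m+1).factorial := by exact_mod_cast (m+1).factorial_pos
    rw [hKdef]; positivity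
  have hsum : Summable (fun k : ℕ => mlTerm lam mu nu k * x ^ k) := ml_summable hlam hmu hnu hx.le
  -- tail term equalities
  have hterm_eq : ∀ j : ℕ, mlTerm lam mu nu (j + (m+1)) * x ^ (j + (m+1))
      = (poch nu (m+1) * poch nu' j * x ^ (m+1) * x ^ j)
        / (Real.Gamma (lam * (j:ℝ) + mu') * ((j + (m+1)).factorial : ℝ)) := by
    intro j
    unfold mlTerm
    rw [add_comm j (m+1), poch_add, pow_add]
    have h1 : lam * ((↑(m+1+j)):ℝ) + mu = lam * (j:ℝ) + mu' := by push_cast [hmu'def]; ring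
    have h2 : nu + ((m+1 : ℕ):ℝ) = nu' := by push_cast [hnu'def]; ring
    rw [h1, h2, add_comm (m+1) j]
    ring
  have hterm_eq2 : ∀ j : ℕ, K * (mlTerm lam mu' nu' j * x ^ j)
      = (poch nu (m+1) * poch nu' j * x ^ (m+1) * x ^ j)
        / (Real.Gamma (lam * (j:ℝ) + mu') * (((m+1).factorial * j.factorial : ℕ) : ℝ)) := by
    intro j
    unfold mlTerm
    rw [hKdef, hxm]
    push_cast
    ring
  have hGam : ∀ j : ℕ, 0 < Real.Gamma (lam * (j:ℝ) + mu') :=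
    fun j => Real.Gamma_pos_of_pos (by positivity)
  -- termwise inequality
  have hfac_le : ∀ j : ℕ, ((m+1).factorial * j.factorial : ℕ) ≤ (j + (m+1)).factorial := by
    intro j
    rw [add_comm j (m+1)]
    exact Nat.le_of_dvd (Nat.factorial_pos _) (Nat.factorial_mul_factorial_dvd_factorial_add _ _)
  have hterm_le : ∀ j : ℕ, mlTerm lam mu nu (j + (m+1)) * x ^ (j + (m+1))
      ≤ K * (mlTerm lam mu' nu' j * x ^ j) := by
    intro j
    rw [hterm_eq j, hterm_eq2 j]
    have hnum : 0 ≤ poch nu (m+1) * poch nu' j * x ^ (m+1) * x ^ j := by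
      have := poch_pos hnu (m+1); have := poch_pos hnu' j; positivity
    apply div_le_div_of_nonneg_left hnum ?_ ?_
    · have : (0:ℝ) < (((m+1).factorial * j.factorial : ℕ) : ℝ) := by
        exact_mod_cast Nat.mul_pos (Nat.factorial_pos _) (Nat.factorial_pos _)
      exact mul_pos (hGam j) this
    · exact mul_le_mul_of_nonneg_left (by exact_mod_cast hfac_le j) (hGam j).le
  -- the tail
  set T : ℝ := ∑' j : ℕ, mlTerm lam mu nu (j + (m+1)) * x ^ (j + (m+1)) with hTdef
  have hsplit : mittagLeffler lam mu nu x
      = (∑ j ∈ Finset.range (m+1), mlTerm lam mu nu j * x ^ j) + T :=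
    (Summable.sum_add_tsum_nat_add (m+1) hsum).symm
  -- the remainder function
  set G : ℝ → ℝ := fun ξ => K * mittagLeffler lam mu' nu' (ξ ^ β) with hGdef
  have hsumx : Summable (fun j : ℕ => mlTerm lam mu' nu' j * x ^ j) :=
    ml_summable hlam hmu' hnu' hx.le
  have htail_nonneg : ∀ j : ℕ, 0 ≤ mlTerm lam mu nu (j + (m+1)) * x ^ (j + (m+1)) :=
    fun j => mul_nonneg (mlTerm_pos hlam.le hmu hnu _).le (pow_nonneg hx.le _)
  -- T < G z
  have hGz : T < G z := by
    have hzb : (z:ℝ) ^ β = x := rfl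
    rw [hGdef]
    simp only [hzb]
    rw [ml_eq, ← tsum_mul_left]
    refine Summable.tsum_lt_tsum_of_nonneg (i := 1) htail_nonneg hterm_le ?_ (hsumx.mul_left K)
    · -- strict at j = 1
      rw [hterm_eq 1, hterm_eq2 1]
      have hnum : 0 < poch nu (m+1) * poch nu' 1 * x ^ (m+1) * x ^ 1 := by
        have := poch_pos hnu (m+1); have := poch_pos hnu' 1; positivity
      apply div_lt_div_of_pos_left hnum
      · have : (0:ℝ) < (((m+1).factorial * Nat.factorial 1 : ℕ) : ℝ) := by
          exact_mod_cast Nat.mul_pos (Nat.factorial_pos _) (Nat.factorial_pos _)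
        exact mul_pos (hGam 1) this
      · apply mul_lt_mul_of_pos_left ?_ (hGam 1)
        have : ((m+1).factorial * Nat.factorial 1 : ℕ) < (1 + (m+1)).factorial := by
          rw [Nat.factorial_one, Nat.mul_one, add_comm 1 (m+1)]
          exact (Nat.factorial_lt (by omega)).2 (by omega)
        exact_mod_cast this
  -- G 0 < T
  have hG0 : G 0 < T := by
    have h0b : (0:ℝ) ^ β = 0 := Real.zero_rpow hβ.ne'
    have hml0 : mittagLeffler lam mu' nu' 0 = mlTerm lam mu' nu' 0 := by
      rw [ml_eq]
      rw [tsum_eq_single 0 (fun j hj => by rw [zero_pow hj, mul_zero])]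
      rw [pow_zero, mul_one]
    have hG0eq : G 0 = mlTerm lam mu nu (0 + (m+1)) * x ^ (0 + (m+1)) := by
      have e1 := hterm_eq 0
      have e2 := hterm_eq2 0
      simp only [pow_zero, mul_one] at e1 e2
      have hfaceq : ((0 + (m+1)).factorial : ℝ) = (((m+1).factorial * Nat.factorial 0 : ℕ) : ℝ) := by
        norm_num
      rw [hGdef]
      simp only [h0b]
      rw [hml0, e2, e1, hfaceq]
    have hsumtail : Summable (fun j : ℕ => mlTerm lam mu nu (j + (m+1)) * x ^ (j + (m+1))) :=
      (summable_nat_add_iff (f := fun k : ℕ => mlTerm lam mu nu k * x ^ k) (m+1)).2 hsum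
    have h2le : ∑ j ∈ Finset.range 2, mlTerm lam mu nu (j + (m+1)) * x ^ (j + (m+1)) ≤ T :=
      Summable.sum_le_tsum _ (fun j _ => htail_nonneg j) hsumtail
    have h1pos : 0 < mlTerm lam mu nu (1 + (m+1)) * x ^ (1 + (m+1)) :=
      mul_pos (mlTerm_pos hlam.le hmu hnu _) (pow_pos hx _)
    rw [hG0eq]
    have : ∑ j ∈ Finset.range 2, mlTerm lam mu nu (j + (m+1)) * x ^ (j + (m+1))
        = mlTerm lam mu nu (0 + (m+1)) * x ^ (0 + (m+1))
          + mlTerm lam mu nu (1 + (m+1)) * x ^ (1 + (m+1)) := by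
      rw [Finset.sum_range_succ, Finset.sum_range_one]
    linarith
  -- continuity of G on Icc 0 z
  have hcont : ContinuousOn G (Icc 0 z) := by
    apply ContinuousOn.mul continuousOn_const
    have : ∀ ξ : ℝ, mittagLeffler lam mu' nu' (ξ ^ β) = ∑' j : ℕ, mlTerm lam mu' nu' j * (ξ ^ β) ^ j :=
      fun ξ => ml_eq _ _ _ _
    simp only [this]
    apply continuousOn_tsum (u := fun j => mlTerm lam mu' nu' j * x ^ j)
    · intro j
      apply ContinuousOn.mul continuousOn_const
      apply ContinuousOn.pow
      intro ξ hξ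
      exact (Real.continuousAt_rpow_const ξ β (Or.inr hβ.le)).continuousWithinAt
    · exact hsumx
    · intro j ξ hξ
      have h1 : 0 ≤ ξ ^ β := Real.rpow_nonneg hξ.1 β
      have h2 : ξ ^ β ≤ x := Real.rpow_le_rpow hξ.1 hξ.2 hβ.le
      rw [Real.norm_eq_abs, abs_of_nonneg (mul_nonneg (mlTerm_pos hlam.le hmu' hnu' j).le (pow_nonneg h1 j))]
      exact mul_le_mul_of_nonneg_left (pow_le_pow_left₀ h1 h2 j) (mlTerm_pos hlam.le hmu' hnu' j).le
  -- IVT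
  obtain ⟨ξ, hξmem, hξeq⟩ := intermediate_value_Ioo hz.le hcont ⟨hG0, hGz⟩
  refine ⟨ξ, hξmem, ?_⟩
  have hSeq : (∑ j ∈ Finset.range (m + 1),
      poch nu j / (Real.Gamma (lam * (j : ℝ) + mu) * (j.factorial : ℝ)) * z ^ (β * (j : ℝ)))
      = ∑ j ∈ Finset.range (m+1), mlTerm lam mu nu j * x ^ j := by
    refine Finset.sum_congr rfl fun j _ => ?_
    have : z ^ (β * (j:ℝ)) = x ^ j := by
      rw [hxdef, ← Real.rpow_natCast (z ^ β) j, ← Real.rpow_mul hz.le]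
    rw [this]; rfl
  rw [hSeq, hsplit, ← hξeq]
end

section
/- Series solution of the basic generalized fractional differential equation (Section 5, Example 1): Let ρ > 0, 0 < α ≤ 1, a ≥ 0, λ ∈ ℝ and u_a ∈ ℝ. Define u(x) = u_a · Σ_{n=0}^{∞} λ^n ((x^ρ − a^ρ)/ρ)^{nα} / Γ(nα+1) for x ≥ a. Then u(a) = u_a and for every x > a, (C^{α,ρ}_{a+} u)(x) = λ · u(x). -/
open Real Set Filter MeasureTheory intervalIntegral

/-- Gautschi-type lower bound via log-convexity of `Γ`. -/
lemma fdeAux_gamma_lower {α : ℝ} (hα0 : 0 < α) (hα1 : α ≤ 1) {y : ℝ} (hy : 1 ≤ y) :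
    Real.Gamma y * (y + α - 1) ^ α ≤ Real.Gamma (y + α) := by
  have hy0 : 0 < y := lt_of_lt_of_le one_pos hy
  have hz : 0 < y + α - 1 := by linarith
  have h1 : (0:ℝ) < y + α := by linarith
  have hconv := Real.convexOn_log_Gamma.2 (mem_Ioi.2 h1) (mem_Ioi.2 hz)
    (by linarith : (0:ℝ) ≤ 1 - α) hα0.le (by ring)
  have hcomb : (1 - α) • (y + α) + α • (y + α - 1) = y := by
    simp only [smul_eq_mul]; ring
  rw [hcomb] at hconv
  have hrec : Real.Gamma (y + α) = (y + α - 1) * Real.Gamma (y + α - 1) := by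
    have := Real.Gamma_add_one (ne_of_gt hz)
    rw [show y + α - 1 + 1 = y + α by ring] at this
    exact this
  have hGy : 0 < Real.Gamma y := Real.Gamma_pos_of_pos hy0
  have hG1 : 0 < Real.Gamma (y + α) := Real.Gamma_pos_of_pos h1
  have hG2 : 0 < Real.Gamma (y + α - 1) := Real.Gamma_pos_of_pos hz
  -- turn into exp/log
  have hlog : Real.log (Real.Gamma y) + α * Real.log (y + α - 1) ≤
      Real.log (Real.Gamma (y + α)) := by
    have hlrec : Real.log (Real.Gamma (y + α - 1)) =
        Real.log (Real.Gamma (y + α)) - Real.log (y + α - 1) := by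
      rw [hrec, Real.log_mul (ne_of_gt hz) (ne_of_gt hG2)]; ring
    simp only [Function.comp, smul_eq_mul] at hconv
    rw [hlrec] at hconv
    nlinarith [hconv]
  calc Real.Gamma y * (y + α - 1) ^ α
      = Real.exp (Real.log (Real.Gamma y) + α * Real.log (y + α - 1)) := by
        rw [Real.exp_add, Real.exp_log hGy, Real.rpow_def_of_pos hz, mul_comm α]
    _ ≤ Real.exp (Real.log (Real.Gamma (y + α))) := Real.exp_le_exp.2 hlog
    _ = Real.Gamma (y + α) := Real.exp_log hG1

/-- Master summability lemma. -/
lemma fdeAux_summable {α : ℝ} (hα0 : 0 < α) (hα1 : α ≤ 1) {r : ℝ} (hr : 0 ≤ r) {d : ℝ}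
    (hd : 0 < d) : Summable (fun n : ℕ => r ^ n / Real.Gamma ((n : ℝ) * α + d)) := by
  rcases eq_or_lt_of_le hr with hr0 | hr
  · apply summable_of_ne_finset_zero (s := {0})
    intro n hn
    simp only [Finset.mem_singleton] at hn
    rw [← hr0, zero_pow hn, zero_div]
  · apply summable_of_ratio_norm_eventually_le (r := 1/2) (by norm_num)
    have h0 : Tendsto (fun n : ℕ => (n : ℝ) * α) atTop atTop :=
      tendsto_natCast_atTop_atTop.atTop_mul_const hα0
    have htend : Tendsto (fun n : ℕ => (n : ℝ) * α + d + α - 1) atTop atTop := by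
      simp only [sub_eq_add_neg]
      exact tendsto_atTop_add_const_right _ _
        (tendsto_atTop_add_const_right _ _ (tendsto_atTop_add_const_right _ _ h0))
    have hev : ∀ᶠ n : ℕ in atTop, max 1 ((2 * r) ^ (1/α)) ≤ (n : ℝ) * α + d + α - 1 :=
      htend.eventually_ge_atTop _
    filter_upwards [hev] with n hn
    have hy1 : (1:ℝ) ≤ (n : ℝ) * α + d := by
      have := le_trans (le_max_left _ _) hn; linarith
    set y := (n : ℝ) * α + d with hy
    have hz : 0 < y + α - 1 := by linarith
    have hG1 : 0 < Real.Gamma y := Real.Gamma_pos_of_pos (by linarith)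
    have hG2 : 0 < Real.Gamma (y + α) := Real.Gamma_pos_of_pos (by linarith)
    have hglow := fdeAux_gamma_lower hα0 hα1 hy1
    have h2r : 2 * r ≤ (y + α - 1) ^ α := by
      have h1 : ((2*r) ^ (1/α)) ^ α ≤ (y + α - 1) ^ α :=
        Real.rpow_le_rpow (Real.rpow_nonneg (by linarith) _)
          (le_trans (le_max_right _ _) hn) hα0.le
      rwa [← Real.rpow_mul (by linarith : (0:ℝ) ≤ 2*r), one_div,
        inv_mul_cancel₀ (ne_of_gt hα0), Real.rpow_one] at h1
    have key : Real.Gamma y * (2 * r) ≤ Real.Gamma (y + α) := by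
      calc Real.Gamma y * (2 * r) ≤ Real.Gamma y * (y + α - 1) ^ α := by
            exact mul_le_mul_of_nonneg_left h2r hG1.le
        _ ≤ Real.Gamma (y + α) := hglow
    have hcast : ((n + 1 : ℕ) : ℝ) * α + d = y + α := by push_cast; ring
    rw [hcast]
    rw [Real.norm_eq_abs, Real.norm_eq_abs, abs_div, abs_div,
      abs_of_pos (pow_pos hr _), abs_of_pos (pow_pos hr _),
      abs_of_pos hG1, abs_of_pos hG2]
    have hh : (1:ℝ)/2 * (r ^ n / Real.Gamma y) = r ^ n / (2 * Real.Gamma y) := by ring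
    rw [pow_succ, hh, div_le_div_iff₀ hG2 (by positivity)]
    nlinarith [mul_le_mul_of_nonneg_left key (pow_nonneg hr.le n)]

/-- Interval-integrability of the Beta-type integrand on `[0, L]`. -/
lemma fdeAux_beta_integrable {p q L : ℝ} (hp : 0 < p) (hq : 0 < q) (hL : 0 < L) :
    IntervalIntegrable (fun s => s ^ (p - 1) * (L - s) ^ (q - 1)) volume 0 L := by
  have h1 : IntervalIntegrable (fun s : ℝ => s ^ (p - 1)) volume 0 (L/2) :=
    intervalIntegral.intervalIntegrable_rpow' (by linarith)
  have h2 : IntervalIntegrable (fun s : ℝ => (L - s) ^ (q - 1)) volume (L/2) L := by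
    have base : IntervalIntegrable (fun s : ℝ => s ^ (q - 1)) volume 0 (L/2) :=
      intervalIntegral.intervalIntegrable_rpow' (by linarith)
    simpa [show L - L/2 = L/2 from by ring] using (base.comp_sub_left L).symm
  apply IntervalIntegrable.trans (b := L/2)
  · apply IntervalIntegrable.mul_continuousOn h1
    apply ContinuousOn.rpow_const (continuous_const.sub continuous_id).continuousOn
    intro s hs
    rw [uIcc_of_le (by linarith)] at hs
    left; intro h; change L - s = 0 at h; nlinarith [hs.1, hs.2]
  · apply IntervalIntegrable.continuousOn_mul h2
    apply ContinuousOn.rpow_const continuousOn_id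
    intro s hs
    rw [uIcc_of_le (by linarith)] at hs
    left; intro h; simp only [id_eq] at h; nlinarith [hs.1, hs.2]

/-- Scaled real Beta integral. -/
lemma fdeAux_beta_value {p q L : ℝ} (hp : 0 < p) (hq : 0 < q) (hL : 0 < L) :
    ∫ s in (0:ℝ)..L, s ^ (p - 1) * (L - s) ^ (q - 1) =
      L ^ (p + q - 1) * (Real.Gamma p * Real.Gamma q / Real.Gamma (p + q)) := by
  have hGpq : 0 < Real.Gamma (p + q) := Real.Gamma_pos_of_pos (by linarith)
  have hbeta : Complex.betaIntegral p q =
      ((Real.Gamma p * Real.Gamma q / Real.Gamma (p + q) : ℝ) : ℂ) := by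
    have h := Complex.Gamma_mul_Gamma_eq_betaIntegral
      (by simpa using hp : 0 < (p:ℂ).re) (by simpa using hq : 0 < (q:ℂ).re)
    rw [show ((p:ℂ) + q) = ((p + q : ℝ) : ℂ) by push_cast; ring] at h
    rw [Complex.Gamma_ofReal, Complex.Gamma_ofReal, Complex.Gamma_ofReal] at h
    have hne : ((Real.Gamma (p+q) : ℝ) : ℂ) ≠ 0 := by exact_mod_cast hGpq.ne'
    rw [Complex.ofReal_div, Complex.ofReal_mul, eq_div_iff hne]
    linear_combination -h
  have hscaled := Complex.betaIntegral_scaled (p:ℂ) (q:ℂ) hL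
  have hcongr : (∫ x : ℝ in (0:ℝ)..L, (x:ℂ) ^ ((p:ℂ) - 1) * ((L:ℂ) - (x:ℂ)) ^ ((q:ℂ) - 1)) =
      ((∫ s in (0:ℝ)..L, s ^ (p - 1) * (L - s) ^ (q - 1) : ℝ) : ℂ) := by
    rw [← intervalIntegral.integral_ofReal]
    apply intervalIntegral.integral_congr
    intro s hs
    rw [uIcc_of_le hL.le] at hs
    simp only [Complex.ofReal_mul]
    rw [Complex.ofReal_cpow hs.1, Complex.ofReal_cpow (by linarith [hs.2] : (0:ℝ) ≤ L - s)]
    push_cast; ring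
  rw [hcongr] at hscaled
  rw [show ((p:ℂ) + q - 1) = ((p + q - 1 : ℝ) : ℂ) by push_cast; ring,
    ← Complex.ofReal_cpow hL.le, hbeta] at hscaled
  exact_mod_cast hscaled

/-- Shifted beta integral on `Ioo A X`. -/
lemma fdeAux_beta_shift {p q A X : ℝ} (hp : 0 < p) (hq : 0 < q) (hAX : A < X) :
    IntegrableOn (fun s => (s - A) ^ (p - 1) * (X - s) ^ (q - 1)) (Ioo A X) volume ∧
    ∫ s in Ioo A X, (s - A) ^ (p - 1) * (X - s) ^ (q - 1) =
      (X - A) ^ (p + q - 1) * (Real.Gamma p * Real.Gamma q / Real.Gamma (p + q)) := by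
  have hL : 0 < X - A := by linarith
  have hii : IntervalIntegrable (fun s => (s - A) ^ (p - 1) * (X - s) ^ (q - 1)) volume A X := by
    have := (fdeAux_beta_integrable hp hq hL).comp_sub_right A
    have heq : (fun x => (x - A) ^ (p - 1) * (X - A - (x - A)) ^ (q - 1)) =
        (fun s => (s - A) ^ (p - 1) * (X - s) ^ (q - 1)) := by
      funext s; rw [show X - A - (s - A) = X - s from by ring]
    rw [heq] at this
    simpa [show X - A + A = X from by ring] using this
  constructor
  · exact ((intervalIntegrable_iff_integrableOn_Ioc_of_le hAX.le).mp hii).mono_set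
      Ioo_subset_Ioc_self
  · have h1 : ∫ s in Ioo A X, (s - A) ^ (p - 1) * (X - s) ^ (q - 1) =
        ∫ s in A..X, (s - A) ^ (p - 1) * (X - s) ^ (q - 1) := by
      rw [intervalIntegral.integral_of_le hAX.le, MeasureTheory.integral_Ioc_eq_integral_Ioo]
    rw [h1]
    have h2 := intervalIntegral.integral_comp_sub_right
      (fun s => s ^ (p - 1) * (X - A - s) ^ (q - 1)) A (a := A) (b := X)
    have heq : EqOn (fun s => (s - A) ^ (p - 1) * (X - s) ^ (q - 1))
        (fun s => (s - A) ^ (p-1) * (X - A - (s - A)) ^ (q - 1)) (uIcc A X) := by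
      intro s _; simp only; rw [show X - A - (s - A) = X - s from by ring]
    rw [intervalIntegral.integral_congr heq, h2, sub_self]
    have h3 := fdeAux_beta_value hp hq hL
    have heq2 : EqOn (fun s : ℝ => s ^ (p - 1) * (X - A - s) ^ (q - 1))
        (fun s : ℝ => s ^ (p - 1) * ((X - A) - s) ^ (q - 1)) (uIcc 0 (X - A)) := by
      intro s _; rfl
    rw [intervalIntegral.integral_congr heq2, h3]

/-- Key change of variables: the fractional-integral of a power of `(τ^ρ - a^ρ)/ρ`. -/
lemma fdeAux_key {ρ α a x : ℝ} (hρ : 0 < ρ) (hα0 : 0 < α) (hα1 : α < 1) (ha : 0 ≤ a)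
    (hax : a < x) (c p : ℝ) (hp : 0 < p) :
    IntegrableOn (fun τ => c * ((τ ^ ρ - a ^ ρ) / ρ) ^ (p - 1) * τ ^ (ρ - 1) *
        (x ^ ρ - τ ^ ρ) ^ (-α)) (Ioo a x) volume ∧
    ∫ τ in Ioo a x, c * ((τ ^ ρ - a ^ ρ) / ρ) ^ (p - 1) * τ ^ (ρ - 1) * (x ^ ρ - τ ^ ρ) ^ (-α) =
      c * ((x ^ ρ - a ^ ρ) / ρ) ^ (p - α) * ρ ^ (-α) *
        (Real.Gamma p * Real.Gamma (1 - α) / Real.Gamma (p - α + 1)) := by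
  have hx0 : (0:ℝ) < x := lt_of_le_of_lt ha hax
  have hA0 : (0:ℝ) ≤ a ^ ρ := Real.rpow_nonneg ha ρ
  have hAX : a ^ ρ < x ^ ρ := Real.rpow_lt_rpow ha hax hρ
  set A := a ^ ρ with hA
  set X := x ^ ρ with hX
  have hL : 0 < X - A := by linarith
  -- change of variables data
  have hder : ∀ τ ∈ Ioo a x, HasDerivWithinAt (fun τ : ℝ => τ ^ ρ) (ρ * τ ^ (ρ - 1)) (Ioo a x) τ :=
    fun τ hτ => (Real.hasDerivAt_rpow_const
      (Or.inl (ne_of_gt (lt_of_le_of_lt ha hτ.1)))).hasDerivWithinAt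
  have hinj : InjOn (fun τ : ℝ => τ ^ ρ) (Ioo a x) := by
    intro u hu v hv huv
    by_contra hne
    rcases lt_or_gt_of_ne hne with h | h
    · exact absurd huv (ne_of_lt (Real.rpow_lt_rpow (le_of_lt (lt_of_le_of_lt ha hu.1)) h hρ))
    · exact absurd huv.symm
        (ne_of_lt (Real.rpow_lt_rpow (le_of_lt (lt_of_le_of_lt ha hv.1)) h hρ))
  have himg : (fun τ : ℝ => τ ^ ρ) '' Ioo a x = Ioo A X := by
    ext s
    constructor
    · rintro ⟨τ, hτ, rfl⟩
      exact ⟨Real.rpow_lt_rpow ha hτ.1 hρ, Real.rpow_lt_rpow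
        (le_of_lt (lt_of_le_of_lt ha hτ.1)) hτ.2 hρ⟩
    · intro hs
      have hs0 : 0 < s := lt_of_le_of_lt hA0 hs.1
      refine ⟨s ^ ρ⁻¹, ⟨?_, ?_⟩, ?_⟩
      · rw [← Real.rpow_lt_rpow_iff ha (Real.rpow_nonneg hs0.le _) hρ,
          ← Real.rpow_mul hs0.le, inv_mul_cancel₀ hρ.ne', Real.rpow_one]
        exact hs.1
      · rw [← Real.rpow_lt_rpow_iff (Real.rpow_nonneg hs0.le _) hx0.le hρ,
          ← Real.rpow_mul hs0.le, inv_mul_cancel₀ hρ.ne', Real.rpow_one]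
        exact hs.2
      · show (s ^ ρ⁻¹) ^ ρ = s
        rw [← Real.rpow_mul hs0.le, inv_mul_cancel₀ hρ.ne', Real.rpow_one]
  -- the function downstairs
  set g : ℝ → ℝ := fun s => (c / ρ) * (((s - A) / ρ) ^ (p - 1) * (X - s) ^ (-α)) with hg
  have hshift := fdeAux_beta_shift hp (by linarith : (0:ℝ) < 1 - α) hAX
  have hq1 : (1 : ℝ) - α - 1 = -α := by ring
  have hgint : IntegrableOn g (Ioo A X) volume := by
    apply MeasureTheory.IntegrableOn.congr_fun ((hshift.1).const_mul ((c / ρ) * (ρ ^ (p-1))⁻¹))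
      _ measurableSet_Ioo
    intro s hs
    simp only [hg]
    rw [Real.div_rpow (by linarith [hs.1] : (0:ℝ) ≤ s - A) hρ.le, hq1]
    field_simp
  have hsmul : ∀ τ ∈ Ioo a x, |ρ * τ ^ (ρ - 1)| • g (τ ^ ρ) =
      c * ((τ ^ ρ - A) / ρ) ^ (p - 1) * τ ^ (ρ - 1) * (X - τ ^ ρ) ^ (-α) := by
    intro τ hτ
    have hτ0 : 0 < τ := lt_of_le_of_lt ha hτ.1
    have : |ρ * τ ^ (ρ - 1)| = ρ * τ ^ (ρ - 1) :=
      abs_of_pos (mul_pos hρ (Real.rpow_pos_of_pos hτ0 _))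
    rw [this, smul_eq_mul, hg]
    field_simp
  constructor
  · have := (integrableOn_image_iff_integrableOn_abs_deriv_smul measurableSet_Ioo hder hinj
      g).mp (by rwa [himg])
    apply this.congr_fun _ measurableSet_Ioo
    intro τ hτ
    exact hsmul τ hτ
  · have hval := integral_image_eq_integral_abs_deriv_smul measurableSet_Ioo hder hinj g
    rw [himg] at hval
    have hrhs : ∫ τ in Ioo a x, |ρ * τ ^ (ρ - 1)| • g (τ ^ ρ) =
        ∫ τ in Ioo a x, c * ((τ ^ ρ - A) / ρ) ^ (p - 1) * τ ^ (ρ - 1) * (X - τ ^ ρ) ^ (-α) :=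
      setIntegral_congr_fun measurableSet_Ioo hsmul
    rw [hrhs] at hval
    rw [← hval]
    -- now compute ∫ g over Ioo A X
    have hgeq : ∫ s in Ioo A X, g s = ((c / ρ) * (ρ ^ (p-1))⁻¹) *
        ∫ s in Ioo A X, (s - A) ^ (p - 1) * (X - s) ^ ((1 - α) - 1) := by
      rw [← MeasureTheory.integral_const_mul]
      apply setIntegral_congr_fun measurableSet_Ioo
      intro s hs
      simp only [hg]
      rw [Real.div_rpow (by linarith [hs.1] : (0:ℝ) ≤ s - A) hρ.le, hq1]
      field_simp
    rw [hgeq, hshift.2]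
    have harg : p + (1 - α) - 1 = p - α := by ring
    have harg2 : p + (1 - α) = p - α + 1 := by ring
    rw [harg, harg2]
    -- algebra with rpow
    have h1 : ((X - A) / ρ) ^ (p - α) = (X - A) ^ (p - α) / ρ ^ (p - α) :=
      Real.div_rpow hL.le hρ.le _
    have h2 : ρ ^ (p - α) = ρ ^ (p - 1) * ρ ^ (1:ℝ) * ρ ^ (-α) := by
      rw [← Real.rpow_add hρ, ← Real.rpow_add hρ]; ring_nf
    have hρp : (0:ℝ) < ρ ^ (p-1) := Real.rpow_pos_of_pos hρ _
    have hρa : (0:ℝ) < ρ ^ (-α) := Real.rpow_pos_of_pos hρ _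
    rw [h1, h2, Real.rpow_one]
    have hG : 0 < Real.Gamma (p - α + 1) := Real.Gamma_pos_of_pos (by linarith)
    field_simp [hρa.ne', hρp.ne']

section
variable {α lam : ℝ}

lemma fdeAux_gamma_pos (hα0 : 0 < α) (n : ℕ) : 0 < Real.Gamma ((n : ℝ) * α + 1) :=
  Real.Gamma_pos_of_pos (by positivity)

lemma fdeAux_rpow_pow {t : ℝ} (ht : 0 ≤ t) (n : ℕ) : t ^ ((n : ℝ) * α) = (t ^ α) ^ n := by
  rw [mul_comm, Real.rpow_mul ht, Real.rpow_natCast]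

/-- Summability of the Mittag-Leffler-type series. -/
lemma fdeAux_sumT (hα0 : 0 < α) (hα1 : α ≤ 1) {t : ℝ} (ht : 0 ≤ t) :
    Summable (fun n : ℕ => lam ^ n * t ^ ((n : ℝ) * α) / Real.Gamma ((n : ℝ) * α + 1)) := by
  apply Summable.of_norm_bounded (g := fun n : ℕ =>
    (|lam| * t ^ α) ^ n / Real.Gamma ((n : ℝ) * α + 1))
    (fdeAux_summable hα0 hα1 (by positivity) one_pos)
  intro n
  have hG := fdeAux_gamma_pos hα0 (n : ℕ)
  rw [Real.norm_eq_abs, abs_div, abs_of_pos hG, abs_mul, abs_pow,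
    abs_of_nonneg (Real.rpow_nonneg ht _), fdeAux_rpow_pow ht, mul_pow]

/-- Summability of the term-wise derivative with a uniform bound on `[ε, T₀]`. -/
lemma fdeAux_sumD_aux (hα0 : 0 < α) (hα1 : α ≤ 1) {c : ℝ} (hc : 0 < c) :
    Summable (fun n : ℕ =>
      |lam| ^ n * ((n : ℝ) * α) * c ^ ((n : ℝ) * α - 1) / Real.Gamma ((n : ℝ) * α + 1)) := by
  rw [← summable_nat_add_iff 1]
  have base : Summable (fun n : ℕ =>
      (|lam| * c ^ (α - 1)) * ((|lam| * c ^ α) ^ n / Real.Gamma ((n : ℝ) * α + α))) :=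
    (fdeAux_summable hα0 hα1 (by positivity) hα0).mul_left _
  apply base.congr
  intro n
  have hne : ((n : ℝ) + 1) * α ≠ 0 := by positivity
  have hGrec : Real.Gamma (((n : ℝ) + 1) * α + 1) =
      (((n : ℝ) + 1) * α) * Real.Gamma (((n : ℝ) + 1) * α) := Real.Gamma_add_one hne
  have hGpos : 0 < Real.Gamma (((n : ℝ) + 1) * α) := Real.Gamma_pos_of_pos (by positivity)
  have hcast : ((n + 1 : ℕ) : ℝ) = (n : ℝ) + 1 := by push_cast; ring
  simp only [hcast, pow_succ]
  rw [hGrec]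
  have hexp : c ^ (((n : ℝ) + 1) * α - 1) = (c ^ α) ^ n * c ^ (α - 1) := by
    rw [show ((n : ℝ) + 1) * α - 1 = (n : ℝ) * α + (α - 1) by ring, Real.rpow_add hc,
      fdeAux_rpow_pow hc.le]
  have hexp2 : Real.Gamma (((n : ℝ) + 1) * α) = Real.Gamma ((n : ℝ) * α + α) := by ring_nf
  rw [hexp, hexp2, mul_pow]
  field_simp

set_option maxHeartbeats 1000000 in
/-- The series can be differentiated term by term. -/
lemma fdeAux_hasDeriv (hα0 : 0 < α) (hα1 : α ≤ 1) {t : ℝ} (ht : 0 < t) :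
    HasDerivAt (fun t : ℝ => ∑' n : ℕ, lam ^ n * t ^ ((n : ℝ) * α) / Real.Gamma ((n : ℝ) * α + 1))
      (∑' n : ℕ, lam ^ n * (((n : ℝ) * α) * t ^ ((n : ℝ) * α - 1)) /
        Real.Gamma ((n : ℝ) * α + 1)) t := by
  set UB : ℕ → ℝ := fun n =>
      |lam| ^ n * ((n : ℝ) * α) * (t/2) ^ ((n : ℝ) * α - 1) / Real.Gamma ((n : ℝ) * α + 1) +
      |lam| ^ n * ((n : ℝ) * α) * (t+1) ^ ((n : ℝ) * α - 1) / Real.Gamma ((n : ℝ) * α + 1)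
    with hUB
  have hUBsum : Summable UB :=
    (fdeAux_sumD_aux hα0 hα1 (by linarith)).add (fdeAux_sumD_aux hα0 hα1 (by linarith))
  apply hasDerivAt_tsum_of_isPreconnected hUBsum (isOpen_Ioo (a := t/2) (b := t+1))
    (isPreconnected_Ioo) _ _ (by constructor <;> linarith) (fdeAux_sumT hα0 hα1 ht.le)
    (by constructor <;> linarith : t ∈ Ioo (t/2) (t+1))
  · intro n y hy
    have hy0 : 0 < y := lt_trans (by linarith [hy.1] : (0:ℝ) < t/2) hy.1
    exact ((Real.hasDerivAt_rpow_const (p := (n : ℝ) * α) (Or.inl hy0.ne')).const_mul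
      (lam ^ n)).div_const _
  · intro n y hy
    have hy0 : 0 < y := by linarith [hy.1]
    have hG := fdeAux_gamma_pos hα0 n
    rw [Real.norm_eq_abs, abs_div, abs_of_pos hG, abs_mul, abs_pow,
      abs_of_nonneg (by positivity : (0:ℝ) ≤ ((n : ℝ) * α) * y ^ ((n : ℝ) * α - 1))]
    have hb : y ^ ((n : ℝ) * α - 1) ≤ (t/2) ^ ((n : ℝ) * α - 1) + (t+1) ^ ((n : ℝ) * α - 1) := by
      rcases le_or_gt 0 ((n : ℝ) * α - 1) with h | h
      · calc y ^ ((n : ℝ) * α - 1) ≤ (t+1) ^ ((n : ℝ) * α - 1) :=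
              Real.rpow_le_rpow hy0.le (by linarith [hy.2]) h
          _ ≤ _ := le_add_of_nonneg_left (by positivity)
      · calc y ^ ((n : ℝ) * α - 1) ≤ (t/2) ^ ((n : ℝ) * α - 1) :=
              Real.rpow_le_rpow_of_nonpos (by linarith) hy.1.le h.le
          _ ≤ _ := le_add_of_nonneg_right (by positivity)
    calc |lam| ^ n * (((n : ℝ) * α) * y ^ ((n : ℝ) * α - 1)) / Real.Gamma ((n : ℝ) * α + 1)
        ≤ |lam| ^ n * (((n : ℝ) * α) * ((t/2) ^ ((n : ℝ) * α - 1) + (t+1) ^ ((n : ℝ) * α - 1))) /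
          Real.Gamma ((n : ℝ) * α + 1) := by
          gcongr
      _ = UB n := by rw [hUB]; ring
  
/-- Summability of the term-wise derivative at a point. -/
lemma fdeAux_sumD (hα0 : 0 < α) (hα1 : α ≤ 1) {t : ℝ} (ht : 0 < t) :
    Summable (fun n : ℕ => lam ^ n * (((n : ℝ) * α) * t ^ ((n : ℝ) * α - 1)) /
      Real.Gamma ((n : ℝ) * α + 1)) := by
  apply Summable.of_norm_bounded (g := fun n : ℕ =>
    |lam| ^ n * ((n : ℝ) * α) * t ^ ((n : ℝ) * α - 1) / Real.Gamma ((n : ℝ) * α + 1))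
    (fdeAux_sumD_aux hα0 hα1 ht)
  intro n
  have hG := fdeAux_gamma_pos hα0 (n : ℕ)
  rw [Real.norm_eq_abs, abs_div, abs_of_pos hG, abs_mul, abs_pow,
    abs_of_nonneg (by positivity : (0:ℝ) ≤ ((n : ℝ) * α) * t ^ ((n : ℝ) * α - 1))]
  apply le_of_eq
  ring
end

/-- The left generalized (Katugampola) Caputo-type fractional derivative of order `α`
(with `0 < α ≤ 1`), parameter `ρ > 0` and base point `a`. -/
noncomputable def genCaputoL (ρ α a : ℝ) (f : ℝ → ℝ) : ℝ → ℝ :=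
  if α = 1 then fun x => x ^ (1 - ρ) * deriv f x
  else fun x => ρ ^ α / Real.Gamma (1 - α) * ∫ τ in a..x, deriv f τ * (x ^ ρ - τ ^ ρ) ^ (-α)

/-- Series solution of the basic generalized fractional differential equation
`C^{α,ρ}_{a+} u = λ u`, `u(a) = u_a` (Section 5, Example 1): the function
`u(x) = u_a Σ_{n=0}^∞ λⁿ ((x^ρ - a^ρ)/ρ)^{nα} / Γ(nα+1)`
(i.e. `u_a E_α(λ ρ^{-α} (x^ρ - a^ρ)^α)`) satisfies it. -/
theorem fde_mittagLeffler_solution (ρ α a lam ua : ℝ) (u : ℝ → ℝ)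
    (hρ : 0 < ρ) (hα0 : 0 < α) (hα1 : α ≤ 1) (ha : 0 ≤ a)
    (hu : ∀ x, a ≤ x →
      u x = ua * ∑' n : ℕ,
        lam ^ n * ((x ^ ρ - a ^ ρ) / ρ) ^ ((n : ℝ) * α) / Real.Gamma ((n : ℝ) * α + 1)) :
    u a = ua ∧ ∀ x, a < x → genCaputoL ρ α a u x = lam * u x := by
  constructor
  · -- u a = ua
    rw [hu a le_rfl, show (a ^ ρ - a ^ ρ) / ρ = 0 by simp]
    have : ∑' n : ℕ, lam ^ n * (0:ℝ) ^ ((n : ℝ) * α) / Real.Gamma ((n : ℝ) * α + 1) = 1 := by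
      rw [tsum_eq_single 0]
      · simp
      · intro n hn
        rw [Real.zero_rpow (by positivity : ((n:ℝ) * α) ≠ 0)]
        · simp
    rw [this, mul_one]
  · -- the differential equation
    intro x hax
    have hx0 : 0 < x := lt_of_le_of_lt ha hax
    -- derivative of u on (a, ∞)
    have hud : ∀ z, a < z → HasDerivAt u
        (ua * ((∑' n : ℕ, lam ^ n * (((n:ℝ)*α) * ((z^ρ - a^ρ)/ρ) ^ ((n:ℝ)*α - 1)) /
          Real.Gamma ((n:ℝ)*α+1)) * z ^ (ρ-1))) z := by
      intro z hz
      have hz0 : 0 < z := lt_of_le_of_lt ha hz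
      have hyz : 0 < (z^ρ - a^ρ)/ρ :=
        div_pos (by linarith [Real.rpow_lt_rpow ha hz hρ]) hρ
      have hinner : HasDerivAt (fun w : ℝ => (w^ρ - a^ρ)/ρ) (z^(ρ-1)) z := by
        have h := ((Real.hasDerivAt_rpow_const (p:=ρ) (Or.inl hz0.ne')).sub_const (a^ρ)).div_const ρ
        exact h.congr_deriv (mul_div_cancel_left₀ _ hρ.ne')
      have houter := fdeAux_hasDeriv (lam:=lam) hα0 hα1 hyz
      have hcomp := (houter.comp z hinner).const_mul ua
      apply hcomp.congr_of_eventuallyEq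
      filter_upwards [isOpen_Ioi.mem_nhds hz] with w hw
      exact hu w (le_of_lt hw)
    have hyx : 0 < (x^ρ - a^ρ)/ρ :=
      div_pos (by linarith [Real.rpow_lt_rpow ha hax hρ]) hρ
    by_cases h1 : α = 1
    · -- classical case
      subst h1
      simp only [genCaputoL, if_pos]
      rw [(hud x hax).deriv, hu x hax.le]
      have hres : (∑' n : ℕ, lam ^ n * (((n:ℝ)*1) * ((x^ρ - a^ρ)/ρ) ^ ((n:ℝ)*1 - 1)) /
            Real.Gamma ((n:ℝ)*1+1)) =
          lam * ∑' n : ℕ, lam ^ n * ((x ^ ρ - a ^ ρ) / ρ) ^ ((n : ℝ) * 1) /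
            Real.Gamma ((n : ℝ) * 1 + 1) := by
        rw [Summable.tsum_eq_zero_add (fdeAux_sumD one_pos le_rfl hyx), ← tsum_mul_left]
        simp only [Nat.cast_zero, zero_mul, zero_div, mul_zero, zero_add, Nat.cast_succ]
        apply tsum_congr
        intro n
        have hG : Real.Gamma (((n:ℝ)+1)*1 + 1) = (((n:ℝ)+1)*1) * Real.Gamma (((n:ℝ)+1)*1) := by
          rw [← Real.Gamma_add_one (by positivity)]
        have hG2 : (((n:ℝ)+1)*1) = ((n:ℝ)*1 + 1) := by ring
        have hGpos : 0 < Real.Gamma ((n:ℝ)*1+1) := Real.Gamma_pos_of_pos (by positivity)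
        have he : ((n:ℝ)+1)*1 - 1 = (n:ℝ)*1 := by ring
        rw [hG, he, hG2, pow_succ]
        field_simp
      rw [hres]
      have hxx : x ^ (1-ρ) * x ^ (ρ-1) = 1 := by
        rw [← Real.rpow_add hx0]
        norm_num
      calc x ^ (1-ρ) * (ua * (lam * (∑' n : ℕ, lam ^ n * ((x ^ ρ - a ^ ρ) / ρ) ^ ((n : ℝ) * 1) /
              Real.Gamma ((n : ℝ) * 1 + 1)) * x ^ (ρ-1)))
          = (x ^ (1-ρ) * x ^ (ρ-1)) * (lam * (ua * ∑' n : ℕ, lam ^ n *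
              ((x ^ ρ - a ^ ρ) / ρ) ^ ((n : ℝ) * 1) / Real.Gamma ((n : ℝ) * 1 + 1))) := by ring
        _ = _ := by rw [hxx]; ring
    · -- fractional case
      have hα1' : α < 1 := lt_of_le_of_ne hα1 h1
      simp only [genCaputoL, if_neg h1]
      set F : ℕ → ℝ → ℝ := fun n τ =>
        (ua * lam ^ n * ((n:ℝ)*α) / Real.Gamma ((n:ℝ)*α+1)) *
          ((τ^ρ - a^ρ)/ρ) ^ ((n:ℝ)*α - 1) * τ ^ (ρ-1) * (x^ρ - τ^ρ) ^ (-α) with hF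
      set V : ℕ → ℝ := fun n =>
        (ua * lam ^ n * ((n:ℝ)*α) / Real.Gamma ((n:ℝ)*α+1)) *
          ((x^ρ - a^ρ)/ρ) ^ ((n:ℝ)*α - α) * ρ^(-α) *
          (Real.Gamma ((n:ℝ)*α) * Real.Gamma (1-α) / Real.Gamma ((n:ℝ)*α - α + 1)) with hV
      set Vabs : ℕ → ℝ := fun n =>
        |ua * lam ^ n * ((n:ℝ)*α) / Real.Gamma ((n:ℝ)*α+1)| *
          ((x^ρ - a^ρ)/ρ) ^ ((n:ℝ)*α - α) * ρ^(-α) *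
          (Real.Gamma ((n:ℝ)*α) * Real.Gamma (1-α) / Real.Gamma ((n:ℝ)*α - α + 1)) with hVabs
      -- rewrite the integral over Ioo
      rw [intervalIntegral.integral_of_le hax.le, MeasureTheory.integral_Ioc_eq_integral_Ioo]
      have hFcongr : EqOn (fun τ => deriv u τ * (x^ρ - τ^ρ) ^ (-α))
          (fun τ => ∑' n : ℕ, F n τ) (Ioo a x) := by
        intro τ hτ
        simp only
        rw [(hud τ hτ.1).deriv]
        have hterm : ∀ n : ℕ, F n τ =
            (lam ^ n * (((n:ℝ)*α) * ((τ^ρ - a^ρ)/ρ) ^ ((n:ℝ)*α - 1)) /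
              Real.Gamma ((n:ℝ)*α+1)) * (ua * (τ ^ (ρ-1) * (x^ρ - τ^ρ) ^ (-α))) := by
          intro n; rw [hF]; ring
        rw [tsum_congr hterm, tsum_mul_right]
        ring
      rw [setIntegral_congr_fun measurableSet_Ioo hFcongr]
      -- integrability of each term
      have hInt : ∀ n : ℕ, IntegrableOn (fun τ => F n τ) (Ioo a x) volume := by
        intro n
        cases n with
        | zero =>
          apply (integrableOn_zero (s := Ioo a x)).congr_fun _ measurableSet_Ioo
          intro τ _
          simp [hF]
        | succ m =>
          have hp : (0:ℝ) < ((m+1:ℕ):ℝ)*α := by positivity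
          exact (fdeAux_key hρ hα0 hα1' ha hax _ _ hp).1
      -- value of each term
      have hVal : ∀ n : ℕ, ∫ τ in Ioo a x, F n τ = V n := by
        intro n
        cases n with
        | zero =>
          rw [hV]
          simp only [Nat.cast_zero, zero_mul, mul_zero, zero_div, zero_mul]
          rw [MeasureTheory.setIntegral_congr_fun measurableSet_Ioo
            (fun τ _ => by simp [hF] : EqOn (fun τ => F 0 τ) (fun _ => (0:ℝ)) (Ioo a x))]
          simp
        | succ m =>
          have hp : (0:ℝ) < ((m+1:ℕ):ℝ)*α := by positivity
          exact (fdeAux_key hρ hα0 hα1' ha hax _ _ hp).2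
      -- norms
      have hNormVal : ∀ n : ℕ, (∫ τ in Ioo a x, ‖F n τ‖) = Vabs n := by
        intro n
        have hAbs : EqOn (fun τ => ‖F n τ‖)
            (fun τ => |ua * lam ^ n * ((n:ℝ)*α) / Real.Gamma ((n:ℝ)*α+1)| *
              ((τ^ρ - a^ρ)/ρ) ^ ((n:ℝ)*α - 1) * τ ^ (ρ-1) * (x^ρ - τ^ρ) ^ (-α)) (Ioo a x) := by
          intro τ hτ
          have hτ0 : 0 < τ := lt_of_le_of_lt ha hτ.1
          have hw : 0 < (τ^ρ - a^ρ)/ρ :=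
            div_pos (by linarith [Real.rpow_lt_rpow ha hτ.1 hρ]) hρ
          have hXτ : 0 < x^ρ - τ^ρ := by
            linarith [Real.rpow_lt_rpow hτ0.le hτ.2 hρ]
          simp only [hF, Real.norm_eq_abs]
          rw [abs_mul, abs_mul, abs_mul,
            abs_of_pos (Real.rpow_pos_of_pos hw _),
            abs_of_pos (Real.rpow_pos_of_pos hτ0 _),
            abs_of_pos (Real.rpow_pos_of_pos hXτ _)]
        rw [MeasureTheory.setIntegral_congr_fun measurableSet_Ioo hAbs]
        cases n with
        | zero =>
          rw [hVabs]
          simp only [Nat.cast_zero, zero_mul, mul_zero, zero_div, abs_zero, zero_mul]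
          simp
        | succ m =>
          have hp : (0:ℝ) < ((m+1:ℕ):ℝ)*α := by positivity
          exact (fdeAux_key hρ hα0 hα1' ha hax _ _ hp).2
      have hVabsSum : Summable Vabs := by
        rw [← summable_nat_add_iff 1]
        have base : Summable (fun n : ℕ =>
            (|ua| * |lam| * ρ^(-α) * Real.Gamma (1-α)) *
              ((|lam| * ((x^ρ - a^ρ)/ρ) ^ α) ^ n / Real.Gamma ((n:ℝ)*α + 1))) :=
          (fdeAux_summable hα0 hα1 (by positivity) one_pos).mul_left _
        apply base.congr
        intro n
        have hm : ((n + 1 : ℕ) : ℝ) = (n:ℝ) + 1 := by push_cast; ring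
        have hmα : (0:ℝ) < ((n:ℝ)+1)*α := by positivity
        have hGrec : Real.Gamma (((n:ℝ)+1)*α + 1) =
            (((n:ℝ)+1)*α) * Real.Gamma (((n:ℝ)+1)*α) := Real.Gamma_add_one hmα.ne'
        have hGpos : 0 < Real.Gamma (((n:ℝ)+1)*α) := Real.Gamma_pos_of_pos hmα
        have hG1pos : 0 < Real.Gamma ((n:ℝ)*α + 1) := Real.Gamma_pos_of_pos (by positivity)
        have he1 : ((n:ℝ)+1)*α - α = (n:ℝ)*α := by ring
        have he2 : ((n:ℝ)+1)*α - α + 1 = (n:ℝ)*α + 1 := by ring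
        have hrp : ((x^ρ - a^ρ)/ρ) ^ ((n:ℝ)*α) = (((x^ρ - a^ρ)/ρ) ^ α) ^ n := by
          rw [mul_comm, Real.rpow_mul hyx.le, Real.rpow_natCast]
        rw [hVabs]
        simp only [hm]
        rw [hGrec, he1, hrp]
        rw [abs_div, abs_mul, abs_mul, abs_of_pos (by positivity :
          (0:ℝ) < (((n:ℝ)+1)*α) * Real.Gamma (((n:ℝ)+1)*α)), abs_of_nonneg hmα.le,
          abs_pow, pow_succ, mul_pow]
        field_simp
      have hNorm : Summable (fun n : ℕ => ∫ τ in Ioo a x, ‖F n τ‖) :=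
        hVabsSum.congr (fun n => (hNormVal n).symm)
      have hS := MeasureTheory.hasSum_integral_of_summable_integral_norm hInt hNorm
      rw [← hS.tsum_eq]
      have hsumV : Summable V := hS.summable.congr hVal
      rw [tsum_congr hVal, Summable.tsum_eq_zero_add hsumV]
      have hV0 : V 0 = 0 := by rw [hV]; simp
      rw [hV0, zero_add, ← tsum_mul_left, hu x hax.le]
      have hPT : ∀ n : ℕ, ρ ^ α / Real.Gamma (1-α) * V (n+1) =
          (lam * ua) * (lam ^ n * ((x^ρ - a^ρ)/ρ) ^ ((n:ℝ)*α) /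
            Real.Gamma ((n:ℝ)*α + 1)) := by
        intro n
        have hm : ((n + 1 : ℕ) : ℝ) = (n:ℝ) + 1 := by push_cast; ring
        have hmα : (0:ℝ) < ((n:ℝ)+1)*α := by positivity
        have hGrec : Real.Gamma (((n:ℝ)+1)*α + 1) =
            (((n:ℝ)+1)*α) * Real.Gamma (((n:ℝ)+1)*α) := Real.Gamma_add_one hmα.ne'
        have hGpos : 0 < Real.Gamma (((n:ℝ)+1)*α) := Real.Gamma_pos_of_pos hmα
        have hG1pos : 0 < Real.Gamma ((n:ℝ)*α + 1) := Real.Gamma_pos_of_pos (by positivity)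
        have hGαpos : 0 < Real.Gamma (1 - α) := Real.Gamma_pos_of_pos (by linarith)
        have he1 : ((n:ℝ)+1)*α - α = (n:ℝ)*α := by ring
        have he2 : ((n:ℝ)+1)*α - α + 1 = (n:ℝ)*α + 1 := by ring
        have hρα : ρ ^ α * ρ ^ (-α) = 1 := by
          rw [← Real.rpow_add hρ]; norm_num
        rw [hV]
        simp only [hm]
        rw [hGrec, he1, pow_succ]
        field_simp
        linear_combination (ua * (lam ^ n * lam)) * hρα
      rw [tsum_congr hPT, tsum_mul_left]
      ring
end

section
/- Expansion of the iterated operator γ = x^{1−ρ} d/dx in classical derivatives (Lemma A.1): Let ρ > 0 and j ≥ 1 a natural number, and define the doubly indexed real sequence λ_{i,j} by: λ_{0,j} = 0, λ_{i,j} = 0 for i > j, λ_{j,j} = 1, and λ_{i,j} = λ_{i−1,j−1} + (i − (j−1)ρ)·λ_{i,j−1} for 1 ≤ i < j. If f : ℝ → ℝ is j times continuously differentiable on (0,∞), then for every x > 0: (γ^j f)(x) = Σ_{i=1}^{j} λ_{i,j} · x^{i − jρ} · f^{(i)}(x), where γ^j denotes the j-fold iterate of the operator γ defined by (γ g)(x)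 = x^{1−ρ} g′(x). -/
/-- The operator `γ = x^(1-ρ) d/dx`. -/
noncomputable def gammaOp (ρ : ℝ) (g : ℝ → ℝ) : ℝ → ℝ := fun x => x ^ (1 - ρ) * deriv g x

lemma hasDerivAt_iteratedDeriv_aux {n i : ℕ} {f : ℝ → ℝ}
    (hf : ContDiffOn ℝ n f (Set.Ioi 0)) (hi : i < n) {x : ℝ} (hx : 0 < x) :
    HasDerivAt (iteratedDeriv i f) (iteratedDeriv (i + 1) f x) x := by
  have hs : IsOpen (Set.Ioi (0:ℝ)) := isOpen_Ioi
  have hmem : Set.Ioi (0:ℝ) ∈ nhds x := hs.mem_nhds hx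
  have hEq : Set.EqOn (iteratedDeriv i f) (iteratedDerivWithin i f (Set.Ioi 0)) (Set.Ioi 0) := by
    intro y hy
    simp [iteratedDerivWithin, iteratedDeriv, iteratedFDerivWithin_of_isOpen i hs hy]
  have hd : DifferentiableWithinAt ℝ (iteratedDerivWithin i f (Set.Ioi 0)) (Set.Ioi 0) x :=
    hf.differentiableOn_iteratedDerivWithin (by exact_mod_cast hi) hs.uniqueDiffOn x hx
  have hd2 : DifferentiableAt ℝ (iteratedDeriv i f) x :=
    (hd.congr hEq (hEq hx)).differentiableAt hmem
  rw [iteratedDeriv_succ]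
  exact hd2.hasDerivAt

/-- Expansion of the iterated operator `γ = x^(1-ρ) d/dx` in classical derivatives
(Lemma A.1). The coefficients `lam i j` are the `λ_{i,j}` of the paper. -/
theorem gammaOp_iterate_expansion (ρ : ℝ) (j : ℕ) (f : ℝ → ℝ) (lam : ℕ → ℕ → ℝ)
    (hρ : 0 < ρ) (hj : 1 ≤ j)
    (hl0 : ∀ l, 1 ≤ l → lam 0 l = 0)
    (hgt : ∀ i l, 1 ≤ l → l < i → lam i l = 0)
    (hdiag : ∀ l, 1 ≤ l → lam l l = 1)
    (hrec : ∀ i l, 1 ≤ i → i < l →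
      lam i l = lam (i - 1) (l - 1) + ((i : ℝ) - ((l : ℝ) - 1) * ρ) * lam i (l - 1))
    (hf : ContDiffOn ℝ j f (Set.Ioi 0)) :
    ∀ x : ℝ, 0 < x →
      (gammaOp ρ)^[j] f x
        = ∑ i ∈ Finset.Icc 1 j, lam i j * x ^ ((i : ℝ) - (j : ℝ) * ρ) * iteratedDeriv i f x := by
  induction j with
  | zero => exact absurd hj (by omega)
  | succ n ih =>
    intro x hx
    rcases Nat.eq_zero_or_pos n with hn | hn
    · subst hn
      rw [Function.iterate_one, Finset.Icc_self, Finset.sum_singleton, hdiag 1 le_rfl,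
        iteratedDeriv_one]
      simp only [gammaOp, Nat.cast_one]
      ring_nf
    · -- inductive step, n ≥ 1
      have hfn : ContDiffOn ℝ n f (Set.Ioi 0) := hf.of_le (by exact_mod_cast Nat.le_succ n)
      have IH := ih hn hfn
      rw [Function.iterate_succ_apply']
      have hmem : Set.Ioi (0:ℝ) ∈ nhds x := isOpen_Ioi.mem_nhds hx
      -- the sum function
      set S : ℝ → ℝ := fun y =>
        ∑ i ∈ Finset.Icc 1 n, lam i n * y ^ ((i : ℝ) - (n : ℝ) * ρ) * iteratedDeriv i f y with hS
      have hev : (gammaOp ρ)^[n] f =ᶠ[nhds x] S :=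
        Filter.eventuallyEq_of_mem hmem (fun y hy => IH y hy)
      have hderivS : HasDerivAt S
          (∑ i ∈ Finset.Icc 1 n,
            (lam i n * (((i : ℝ) - (n : ℝ) * ρ) * x ^ ((i : ℝ) - (n : ℝ) * ρ - 1)) *
              iteratedDeriv i f x
            + lam i n * x ^ ((i : ℝ) - (n : ℝ) * ρ) * iteratedDeriv (i + 1) f x)) x := by
        apply HasDerivAt.fun_sum
        intro i hi
        have hi' : i < n + 1 := by
          have := (Finset.mem_Icc.mp hi).2; omega
        have h1 : HasDerivAt (fun y : ℝ => lam i n * y ^ ((i : ℝ) - (n : ℝ) * ρ))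
            (lam i n * (((i : ℝ) - (n : ℝ) * ρ) * x ^ ((i : ℝ) - (n : ℝ) * ρ - 1))) x :=
          (Real.hasDerivAt_rpow_const (Or.inl hx.ne')).const_mul _
        exact h1.mul (hasDerivAt_iteratedDeriv_aux hf hi' hx)
      rw [gammaOp]
      rw [hev.deriv_eq, hderivS.deriv]
      -- key coefficient identity for 1 ≤ i ≤ n+1
      have key : ∀ i, 1 ≤ i → i ≤ n + 1 →
          lam i (n + 1) = lam (i - 1) n + ((i : ℝ) - (n : ℝ) * ρ) * lam i n := by
        intro i h1 h2
        rcases eq_or_lt_of_le h2 with rfl | hlt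
        · rw [hdiag (n+1) (by omega), hgt (n+1) n hn (by omega),
            show n + 1 - 1 = n from rfl, hdiag n hn]
          ring
        · have := hrec i (n + 1) h1 hlt
          simpa using this
      -- rewrite RHS using the coefficient identity and split
      have hRHS : ∑ i ∈ Finset.Icc 1 (n+1),
            lam i (n+1) * x ^ ((i : ℝ) - ((n:ℝ)+1) * ρ) * iteratedDeriv i f x
          = (∑ i ∈ Finset.Icc 1 (n+1),
              lam (i-1) n * x ^ ((i : ℝ) - ((n:ℝ)+1) * ρ) * iteratedDeriv i f x)
          + (∑ i ∈ Finset.Icc 1 (n+1),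
              ((i : ℝ) - (n : ℝ) * ρ) * lam i n * x ^ ((i : ℝ) - ((n:ℝ)+1) * ρ)
                * iteratedDeriv i f x) := by
        rw [← Finset.sum_add_distrib]
        apply Finset.sum_congr rfl
        intro i hi
        obtain ⟨h1, h2⟩ := Finset.mem_Icc.mp hi
        rw [key i h1 h2]
        ring
      have hshift : ∑ i ∈ Finset.Icc 1 (n+1),
            lam (i-1) n * x ^ ((i : ℝ) - ((n:ℝ)+1) * ρ) * iteratedDeriv i f x
          = ∑ i ∈ Finset.Icc 1 n,
            lam i n * x ^ (((i:ℝ)+1) - ((n:ℝ)+1) * ρ) * iteratedDeriv (i+1) f x := by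
        rw [show Finset.Icc 1 (n+1)
            = insert 1 (Finset.map ⟨fun i => i + 1, add_left_injective 1⟩ (Finset.Icc 1 n)) from ?_]
        · rw [Finset.sum_insert (by simp), hl0 n hn, Finset.sum_map]
          simp only [Function.Embedding.coeFn_mk, Nat.add_sub_cancel, zero_mul, zero_add]
          apply Finset.sum_congr rfl
          intro i hi
          push_cast
          ring_nf
        · ext a
          simp only [Finset.mem_Icc, Finset.mem_insert, Finset.mem_map,
            Function.Embedding.coeFn_mk]
          constructor
          · intro ⟨h1, h2⟩
            rcases Nat.eq_or_lt_of_le h1 with rfl | h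
            · left; rfl
            · right; exact ⟨a - 1, by omega, by omega⟩
          · rintro (rfl | ⟨b, hb, rfl⟩) <;> omega
      have htrunc : ∑ i ∈ Finset.Icc 1 (n+1),
            ((i : ℝ) - (n : ℝ) * ρ) * lam i n * x ^ ((i : ℝ) - ((n:ℝ)+1) * ρ)
              * iteratedDeriv i f x
          = ∑ i ∈ Finset.Icc 1 n,
            ((i : ℝ) - (n : ℝ) * ρ) * lam i n * x ^ ((i : ℝ) - ((n:ℝ)+1) * ρ)
              * iteratedDeriv i f x := by
        rw [← Finset.sum_subset (Finset.Icc_subset_Icc_right (Nat.le_succ n))]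
        intro i hi hni
        have h1 := (Finset.mem_Icc.mp hi).1
        have h2 := (Finset.mem_Icc.mp hi).2
        have : i = n + 1 := by
          simp only [Finset.mem_Icc, not_and, not_le] at hni
          omega
        subst this
        rw [hgt (n+1) n hn (by omega)]
        ring
      push_cast
      rw [hRHS, hshift, htrunc, Finset.mul_sum, ← Finset.sum_add_distrib]
      apply Finset.sum_congr rfl
      intro i hi
      have hxx : ∀ a b : ℝ, x ^ a * x ^ b = x ^ (a + b) := fun a b => (Real.rpow_add hx a b).symm
      rw [mul_add]
      have e1 : x ^ (1 - ρ) *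
          (lam i n * (((i : ℝ) - (n : ℝ) * ρ) * x ^ ((i : ℝ) - (n : ℝ) * ρ - 1)) *
            iteratedDeriv i f x)
          = ((i : ℝ) - (n : ℝ) * ρ) * lam i n * x ^ ((i : ℝ) - ((n:ℝ)+1) * ρ)
              * iteratedDeriv i f x := by
        rw [show ((i : ℝ) - ((n:ℝ)+1) * ρ) = (1 - ρ) + ((i : ℝ) - (n : ℝ) * ρ - 1) by ring,
          ← hxx]
        ring
      have e2 : x ^ (1 - ρ) *
          (lam i n * x ^ ((i : ℝ) - (n : ℝ) * ρ) * iteratedDeriv (i+1) f x)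
          = lam i n * x ^ (((i:ℝ)+1) - ((n:ℝ)+1) * ρ) * iteratedDeriv (i+1) f x := by
        rw [show (((i:ℝ)+1) - ((n:ℝ)+1) * ρ) = (1 - ρ) + ((i : ℝ) - (n : ℝ) * ρ) by ring,
          ← hxx]
        ring
      rw [e1, e2]
      ring
end

section
/- Generalized Caputo derivative of power functions (Proposition 5.1, first identity): Let ρ > 0, a ≥ 0, α > 0 with α ∉ ℕ, set n = ⌊α⌋ + 1, and let β be a real number with β > n − 1. Then for every x > a: C^{α,ρ}_{a+}[ t ↦ ((t^ρ − a^ρ)/ρ)^β ](x) = (Γ(1+β)/Γ(1+β−α)) · ((x^ρ − a^ρ)/ρ)^{β−α}. -/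
open Set MeasureTheory

/-- The left generalized (Katugampola) Caputo-type fractional derivative of
non-integer order `α > 0` with `n = ⌊α⌋ + 1`, parameter `ρ > 0` and base point `a`:
`(C^{α,ρ}_{a+} f)(x) = (ρ^(α-n+1)/Γ(n-α)) ∫_a^x τ^(ρ-1) (γⁿ f)(τ) (x^ρ-τ^ρ)^(n-α-1) dτ`. -/
noncomputable def genCaputoHigh (ρ α a : ℝ) (n : ℕ) (f : ℝ → ℝ) : ℝ → ℝ := fun x =>
  ρ ^ (α - (n : ℝ) + 1) / Real.Gamma ((n : ℝ) - α) *
    ∫ τ in a..x, τ ^ (ρ - 1) * (gammaOp ρ)^[n] f τ * (x ^ ρ - τ ^ ρ) ^ ((n : ℝ) - α - 1)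

/-- The real Beta integral in terms of the Gamma function. -/
lemma real_beta {p q : ℝ} (hp : -1 < p) (hq : -1 < q) :
    ∫ u in Set.Ioo (0:ℝ) 1, u ^ p * (1 - u) ^ q
      = Real.Gamma (p+1) * Real.Gamma (q+1) / Real.Gamma (p+q+2) := by
  have hs : (0:ℝ) < p + 1 := by linarith
  have ht : (0:ℝ) < q + 1 := by linarith
  have hkey := Complex.Gamma_mul_Gamma_eq_betaIntegral
    (s := (p+1 : ℝ)) (t := (q+1 : ℝ)) (by simpa using hs) (by simpa using ht)
  have hbeta : Complex.betaIntegral ((p+1 : ℝ) : ℂ) ((q+1 : ℝ) : ℂ)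
      = ((∫ u in (0:ℝ)..1, u ^ p * (1 - u) ^ q : ℝ) : ℂ) := by
    rw [Complex.betaIntegral, ← intervalIntegral.integral_ofReal]
    refine intervalIntegral.integral_congr fun x hx => ?_
    rw [Set.uIcc_of_le zero_le_one] at hx
    push_cast
    rw [Complex.ofReal_cpow hx.1, Complex.ofReal_cpow (by linarith [hx.2] : (0:ℝ) ≤ 1 - x)]
    push_cast
    ring_nf
  have hIoo : (∫ u in (0:ℝ)..1, u ^ p * (1 - u) ^ q : ℝ)
      = ∫ u in Set.Ioo (0:ℝ) 1, u ^ p * (1 - u) ^ q := by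
    rw [intervalIntegral.integral_of_le zero_le_one, MeasureTheory.integral_Ioc_eq_integral_Ioo]
  rw [hbeta, hIoo] at hkey
  have hadd : ((p+1 : ℝ) : ℂ) + ((q+1 : ℝ) : ℂ) = ((p+q+2 : ℝ) : ℂ) := by push_cast; ring
  rw [hadd, Complex.Gamma_ofReal, Complex.Gamma_ofReal, Complex.Gamma_ofReal] at hkey
  have h2 : Real.Gamma (p+q+2) ≠ 0 := (Real.Gamma_pos_of_pos (by linarith)).ne'
  have : Real.Gamma (p+1) * Real.Gamma (q+1)
      = Real.Gamma (p+q+2) * ∫ u in Set.Ioo (0:ℝ) 1, u ^ p * (1 - u) ^ q := by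
    exact_mod_cast hkey
  field_simp [this]
  rw [this]; ring

/-- Change of variables `u = (τ^ρ - a^ρ)/(x^ρ - a^ρ)`. -/
lemma subst_lemma {ρ a x p q : ℝ} (hρ : 0 < ρ) (ha : 0 ≤ a) (hax : a < x) :
    ∫ u in Set.Ioo (0:ℝ) 1, u ^ p * (1 - u) ^ q
      = ∫ τ in Set.Ioo a x, (ρ * τ ^ (ρ-1) / (x^ρ - a^ρ)) *
          (((τ^ρ - a^ρ)/(x^ρ - a^ρ)) ^ p * ((x^ρ - τ^ρ)/(x^ρ - a^ρ)) ^ q) := by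
  have hx0 : 0 < x := lt_of_le_of_lt ha hax
  have hc : 0 < x ^ ρ - a ^ ρ := by
    have := Real.rpow_lt_rpow ha hax hρ
    linarith
  set c := x ^ ρ - a ^ ρ with hcdef
  set ψ : ℝ → ℝ := fun τ => (τ ^ ρ - a ^ ρ) / c with hψ
  have hmono : StrictMonoOn (fun τ : ℝ => τ ^ ρ) (Set.Ici 0) := fun s hs t ht hst =>
    Real.rpow_lt_rpow hs hst hρ
  have himg : ψ '' Set.Ioo a x = Set.Ioo 0 1 := by
    ext u
    constructor
    · rintro ⟨τ, hτ, rfl⟩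
      have h1 : a ^ ρ < τ ^ ρ := hmono ha (le_trans ha hτ.1.le) hτ.1
      have h2 : τ ^ ρ < x ^ ρ := hmono (le_trans ha hτ.1.le) hx0.le hτ.2
      constructor
      · exact div_pos (by linarith) hc
      · rw [div_lt_one hc]; linarith
    · rintro ⟨hu0, hu1⟩
      have hy : (0:ℝ) ≤ a ^ ρ + c * u := by positivity
      have hroot : ((a ^ ρ + c * u) ^ (1/ρ)) ^ ρ = a ^ ρ + c * u := by
        rw [← Real.rpow_mul hy, one_div, inv_mul_cancel₀ hρ.ne', Real.rpow_one]
      refine ⟨(a ^ ρ + c * u) ^ (1/ρ), ⟨?_, ?_⟩, ?_⟩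
      · have h1 : a ^ ρ < a ^ ρ + c * u := by nlinarith
        have := Real.rpow_lt_rpow (Real.rpow_nonneg ha ρ) h1 (by positivity : (0:ℝ) < 1/ρ)
        rwa [← Real.rpow_mul ha, mul_one_div, div_self hρ.ne', Real.rpow_one] at this
      · have h1 : a ^ ρ + c * u < x ^ ρ := by nlinarith
        have := Real.rpow_lt_rpow hy h1 (by positivity : (0:ℝ) < 1/ρ)
        rwa [← Real.rpow_mul hx0.le, mul_one_div, div_self hρ.ne', Real.rpow_one] at this
      · simp only [hψ, hroot]
        field_simp
        ring
  have hderiv : ∀ τ ∈ Set.Ioo a x,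
      HasDerivWithinAt ψ (ρ * τ ^ (ρ-1) / c) (Set.Ioo a x) τ := by
    intro τ hτ
    have hτ0 : (0:ℝ) < τ := lt_of_le_of_lt ha hτ.1
    have h1 : HasDerivAt (fun s : ℝ => s ^ ρ) (ρ * τ ^ (ρ-1)) τ :=
      Real.hasDerivAt_rpow_const (Or.inl hτ0.ne')
    exact (((h1.sub_const (a ^ ρ)).div_const c)).hasDerivWithinAt
  have hinj : Set.InjOn ψ (Set.Ioo a x) := by
    have hsm : StrictMonoOn ψ (Set.Ioo a x) := by
      intro s hs t ht hst
      have h := hmono (le_trans ha hs.1.le) (le_trans ha ht.1.le) hst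
      simp only [hψ]
      gcongr
    exact hsm.injOn
  have := MeasureTheory.integral_image_eq_integral_abs_deriv_smul
    (measurableSet_Ioo) hderiv hinj (fun u => u ^ p * (1-u) ^ q)
  rw [himg] at this
  rw [this]
  refine MeasureTheory.setIntegral_congr_fun measurableSet_Ioo fun τ hτ => ?_
  have hτ0 : (0:ℝ) < τ := lt_of_le_of_lt ha hτ.1
  have habs : |ρ * τ ^ (ρ-1) / c| = ρ * τ ^ (ρ-1) / c := by
    rw [abs_of_pos]; positivity
  have h1ψ : 1 - ψ τ = (x ^ ρ - τ ^ ρ) / c := by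
    simp only [hψ]; field_simp; simp only [hcdef]; ring
  simp only [smul_eq_mul, habs, h1ψ, hψ]
  rw [show 1 - (τ ^ ρ - a ^ ρ) / c = (x ^ ρ - τ ^ ρ) / c from h1ψ]

lemma hasDerivAt_base {ρ a : ℝ} (hρ : 0 < ρ) (ha : 0 ≤ a) (μ : ℝ) {t : ℝ} (ht : a < t) :
    HasDerivAt (fun s : ℝ => ((s ^ ρ - a ^ ρ) / ρ) ^ μ)
      (μ * ((t ^ ρ - a ^ ρ) / ρ) ^ (μ - 1) * t ^ (ρ - 1)) t := by
  have ht0 : 0 < t := lt_of_le_of_lt ha ht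
  have hpos : 0 < (t ^ ρ - a ^ ρ) / ρ := by
    have := Real.rpow_lt_rpow ha ht hρ
    apply div_pos (by linarith) hρ
  have h1 : HasDerivAt (fun s : ℝ => (s ^ ρ - a ^ ρ) / ρ) (ρ * t ^ (ρ - 1) / ρ) t :=
    ((Real.hasDerivAt_rpow_const (Or.inl ht0.ne')).sub_const (a ^ ρ)).div_const ρ
  have h2 := h1.rpow_const (p := μ) (Or.inl hpos.ne')
  convert h2 using 1
  field_simp

/-- Iterated `γ` operator applied to the power function. -/
lemma iter_formula {ρ a β : ℝ} (hρ : 0 < ρ) (ha : 0 ≤ a) :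
    ∀ k : ℕ, (k : ℝ) - 1 < β → ∀ t : ℝ, a < t →
      (gammaOp ρ)^[k] (fun s => ((s ^ ρ - a ^ ρ) / ρ) ^ β) t
        = Real.Gamma (1 + β) / Real.Gamma (1 + β - k) * ((t ^ ρ - a ^ ρ) / ρ) ^ (β - k) := by
  intro k
  induction k with
  | zero =>
    intro h t ht
    push_cast at h
    simp only [Function.iterate_zero_apply, Nat.cast_zero, sub_zero]
    rw [div_self (Real.Gamma_pos_of_pos (by linarith : (0:ℝ) < 1 + β)).ne', one_mul]
  | succ k IH =>
    intro hk t ht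
    have hk' : (k : ℝ) - 1 < β := by push_cast at hk ⊢; linarith
    have hβk : (0:ℝ) < β - k := by push_cast at hk; linarith
    have ht0 : 0 < t := lt_of_le_of_lt ha ht
    rw [Function.iterate_succ_apply']
    show t ^ (1 - ρ) * deriv ((gammaOp ρ)^[k] fun s => ((s ^ ρ - a ^ ρ) / ρ) ^ β) t = _
    have hev : (gammaOp ρ)^[k] (fun s => ((s ^ ρ - a ^ ρ) / ρ) ^ β)
        =ᶠ[nhds t] fun s => Real.Gamma (1 + β) / Real.Gamma (1 + β - k) *
          ((s ^ ρ - a ^ ρ) / ρ) ^ (β - k) :=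
      Filter.eventuallyEq_of_mem (isOpen_Ioi.mem_nhds ht) (fun s hs => IH hk' s hs)
    have hd : HasDerivAt (fun s => Real.Gamma (1 + β) / Real.Gamma (1 + β - k) *
          ((s ^ ρ - a ^ ρ) / ρ) ^ (β - k))
        (Real.Gamma (1 + β) / Real.Gamma (1 + β - k) *
          ((β - k) * ((t ^ ρ - a ^ ρ) / ρ) ^ (β - k - 1) * t ^ (ρ - 1))) t :=
      (hasDerivAt_base hρ ha (β - k) ht).const_mul _
    rw [hev.deriv_eq, hd.deriv]
    have hpow : t ^ (1 - ρ) * t ^ (ρ - 1) = 1 := by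
      rw [← Real.rpow_add ht0]; norm_num
    have hGamma : Real.Gamma (1 + β - k) = (β - k) * Real.Gamma (1 + β - (k + 1)) := by
      have h1 : (1:ℝ) + β - k = (β - k) + 1 := by ring
      have h2 : (1:ℝ) + β - (k + 1) = β - k := by ring
      rw [h1, h2, Real.Gamma_add_one hβk.ne']
    have hGne : Real.Gamma (1 + β - (k + 1)) ≠ 0 :=
      (Real.Gamma_pos_of_pos (by push_cast at hk ⊢; linarith)).ne'
    push_cast
    rw [hGamma]
    have hexp2 : β - (k:ℝ) - 1 = β - ((k:ℝ) + 1) := by ring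
    rw [hexp2]
    set X := ((t ^ ρ - a ^ ρ) / ρ) ^ (β - ((k:ℝ) + 1)) with hX
    have : t ^ (1 - ρ) * (Real.Gamma (1 + β) / ((β - k) * Real.Gamma (1 + β - ((k:ℝ) + 1))) *
        ((β - k) * X * t ^ (ρ - 1)))
        = (t ^ (1 - ρ) * t ^ (ρ - 1)) * ((β - k) / (β - k)) *
          (Real.Gamma (1 + β) / Real.Gamma (1 + β - ((k:ℝ) + 1)) * X) := by
      field_simp
    rw [this, hpow, div_self hβk.ne', one_mul, one_mul]

lemma rpow_alg {c ρ α β m : ℝ} (hc : 0 < c) (hρ : 0 < ρ) :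
    ρ ^ (α - m + 1) * (c / ρ * (c / ρ) ^ (β - m) * c ^ (m - α - 1)) = (c / ρ) ^ (β - α) := by
  have hcρ : 0 < c / ρ := div_pos hc hρ
  have e1 : c / ρ = Real.exp (Real.log c - Real.log ρ) := by
    rw [Real.exp_sub, Real.exp_log hc, Real.exp_log hρ]
  rw [Real.rpow_def_of_pos hρ, Real.rpow_def_of_pos hc, Real.rpow_def_of_pos hcρ,
    Real.rpow_def_of_pos hcρ, Real.log_div hc.ne' hρ.ne', e1,
    ← Real.exp_add, ← Real.exp_add, ← Real.exp_add]
  congr 1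
  ring

/-- Generalized Caputo derivative of power functions (Proposition 5.1, first identity). -/
theorem genCaputo_rpow (ρ a α β : ℝ) (n : ℕ)
    (hρ : 0 < ρ) (ha : 0 ≤ a) (hα : 0 < α) (hαnat : ∀ k : ℕ, α ≠ k)
    (hn : n = ⌊α⌋₊ + 1) (hβ : (n : ℝ) - 1 < β) :
    ∀ x : ℝ, a < x →
      genCaputoHigh ρ α a n (fun t => ((t ^ ρ - a ^ ρ) / ρ) ^ β) x
        = Real.Gamma (1 + β) / Real.Gamma (1 + β - α) *
            ((x ^ ρ - a ^ ρ) / ρ) ^ (β - α) := by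
  intro x hx
  have hx0 : 0 < x := lt_of_le_of_lt ha hx
  have hαn : α < (n : ℝ) := by
    rw [hn]; push_cast; exact Nat.lt_floor_add_one α
  have hn1α : (n : ℝ) - 1 < α := by
    rw [hn]; push_cast
    have h1 : (⌊α⌋₊ : ℝ) ≤ α := Nat.floor_le hα.le
    have h2 : α ≠ (⌊α⌋₊ : ℝ) := hαnat ⌊α⌋₊
    have : (⌊α⌋₊ : ℝ) < α := lt_of_le_of_ne h1 (Ne.symm h2)
    linarith
  have hn1 : (1:ℝ) ≤ (n : ℝ) := by rw [hn]; push_cast; linarith [Nat.zero_le ⌊α⌋₊]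
  have hc : 0 < x ^ ρ - a ^ ρ := by
    have := Real.rpow_lt_rpow ha hx hρ
    linarith
  have hp : (-1:ℝ) < β - n := by linarith
  have hq : (-1:ℝ) < (n : ℝ) - α - 1 := by linarith
  have hβ0 : (0:ℝ) < 1 + β := by linarith
  have hG1 : Real.Gamma ((n:ℝ) - α) ≠ 0 := (Real.Gamma_pos_of_pos (by linarith)).ne'
  have hG2 : Real.Gamma (1 + β - n) ≠ 0 := (Real.Gamma_pos_of_pos (by linarith)).ne'
  have hG4 : Real.Gamma (1 + β - α) ≠ 0 := (Real.Gamma_pos_of_pos (by linarith)).ne'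
  set c := x ^ ρ - a ^ ρ with hcdef
  set Cn := Real.Gamma (1 + β) / Real.Gamma (1 + β - n) with hCn
  set P := c / ρ * (c / ρ) ^ (β - (n:ℝ)) * c ^ ((n:ℝ) - α - 1) with hP
  have hcongr : (∫ τ in Set.Ioo a x, τ ^ (ρ - 1) *
        (gammaOp ρ)^[n] (fun t => ((t ^ ρ - a ^ ρ) / ρ) ^ β) τ *
        (x ^ ρ - τ ^ ρ) ^ ((n:ℝ) - α - 1))
      = ∫ τ in Set.Ioo a x, (Cn * P) * ((ρ * τ ^ (ρ-1) / c) *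
          (((τ^ρ - a^ρ)/c) ^ (β - (n:ℝ)) * ((x^ρ - τ^ρ)/c) ^ ((n:ℝ) - α - 1))) := by
    refine MeasureTheory.setIntegral_congr_fun measurableSet_Ioo fun τ hτ => ?_
    have hτ0 : (0:ℝ) < τ := lt_of_le_of_lt ha hτ.1
    have hA : 0 < τ ^ ρ - a ^ ρ := by
      have := Real.rpow_lt_rpow ha hτ.1 hρ; linarith
    have hY : 0 < x ^ ρ - τ ^ ρ := by
      have := Real.rpow_lt_rpow hτ0.le hτ.2 hρ; linarith
    rw [iter_formula hρ ha n hβ τ hτ.1]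
    have e1 : (c / ρ) ^ (β - (n:ℝ)) * ((τ^ρ - a^ρ)/c) ^ (β - (n:ℝ))
        = ((τ ^ ρ - a ^ ρ) / ρ) ^ (β - (n:ℝ)) := by
      rw [← Real.mul_rpow (by positivity) (by positivity)]
      congr 1
      field_simp
    have e2 : c ^ ((n:ℝ) - α - 1) * ((x^ρ - τ^ρ)/c) ^ ((n:ℝ) - α - 1)
        = (x ^ ρ - τ ^ ρ) ^ ((n:ℝ) - α - 1) := by
      rw [← Real.mul_rpow hc.le (by positivity)]
      congr 1
      field_simp
    have e3 : c / ρ * (ρ * τ ^ (ρ-1) / c) = τ ^ (ρ-1) := by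
      field_simp
    calc τ ^ (ρ - 1) * (Cn * ((τ ^ ρ - a ^ ρ) / ρ) ^ (β - (n:ℝ))) *
          (x ^ ρ - τ ^ ρ) ^ ((n:ℝ) - α - 1)
        = Cn * ((c / ρ * (ρ * τ ^ (ρ-1) / c)) *
            ((c / ρ) ^ (β - (n:ℝ)) * ((τ^ρ - a^ρ)/c) ^ (β - (n:ℝ))) *
            (c ^ ((n:ℝ) - α - 1) * ((x^ρ - τ^ρ)/c) ^ ((n:ℝ) - α - 1))) := by
          rw [e1, e2, e3]; ring
      _ = _ := by simp only [hP]; ring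
  have hbeta := real_beta hp hq
  have hsubst := subst_lemma (p := β - (n:ℝ)) (q := (n:ℝ) - α - 1) hρ ha hx
  rw [← hcdef] at hsubst
  simp only [genCaputoHigh]
  rw [intervalIntegral.integral_of_le hx.le, MeasureTheory.integral_Ioc_eq_integral_Ioo,
    hcongr, MeasureTheory.integral_const_mul, ← hsubst, hbeta]
  have g1 : β - (n:ℝ) + 1 = 1 + β - n := by ring
  have g2 : (n:ℝ) - α - 1 + 1 = (n:ℝ) - α := by ring
  have g3 : β - (n:ℝ) + ((n:ℝ) - α - 1) + 2 = 1 + β - α := by ring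
  rw [g1, g2, g3, hCn]
  have hmain : ρ ^ (α - (n:ℝ) + 1) / Real.Gamma ((n:ℝ) - α) *
      (Real.Gamma (1 + β) / Real.Gamma (1 + β - n) * P *
        (Real.Gamma (1 + β - n) * Real.Gamma ((n:ℝ) - α) / Real.Gamma (1 + β - α)))
      = (ρ ^ (α - (n:ℝ) + 1) * P) * (Real.Gamma (1 + β) / Real.Gamma (1 + β - α)) *
        (Real.Gamma ((n:ℝ) - α) / Real.Gamma ((n:ℝ) - α)) *
        (Real.Gamma (1 + β - n) / Real.Gamma (1 + β - n)) := by
    ring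
  rw [hmain, div_self hG1, div_self hG2, mul_one, mul_one, hP,
    rpow_alg hc hρ (α := α) (β := β) (m := (n:ℝ))]
  ring
end

section
/- Semigroup property of generalized fractional integrals (Proposition 2.1, item 1): Let ρ > 0, 0 < a < b, α > 0, β > 0, and let f : ℝ → ℝ be continuous on [a,b]. Then for every x ∈ (a,b]: (I^{α,ρ}_{a+}(I^{β,ρ}_{a+} f))(x) = (I^{α+β,ρ}_{a+} f)(x). -/
open MeasureTheory Set

/-- The left generalized (Katugampola) fractional integral of order `α > 0` with
parameter `ρ > 0` and base point `a`. -/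
noncomputable def genIntL (ρ α a : ℝ) (f : ℝ → ℝ) : ℝ → ℝ := fun x =>
  ρ ^ (1 - α) / Real.Gamma α *
    ∫ τ in a..x, τ ^ (ρ - 1) * f τ * (x ^ ρ - τ ^ ρ) ^ (α - 1)

-- L1a
lemma auxIntLeft {γ : ℝ} (hγ : 0 < γ) (e c d : ℝ) :
    IntervalIntegrable (fun s => (e - s) ^ (γ - 1)) volume c d := by
  have h : (-1:ℝ) < γ - 1 := by linarith
  have := (intervalIntegral.intervalIntegrable_rpow' (a := e - c) (b := e - d) h).comp_sub_left e
  simpa using this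

-- L1b
lemma auxIntRight {γ : ℝ} (hγ : 0 < γ) (e c d : ℝ) :
    IntervalIntegrable (fun s => (s - e) ^ (γ - 1)) volume c d := by
  have h : (-1:ℝ) < γ - 1 := by linarith
  have := (intervalIntegral.intervalIntegrable_rpow' (a := c - e) (b := d - e) h).comp_sub_right e
  simpa using this

-- L1c
lemma auxIntVal {β : ℝ} (hβ : 0 < β) {A s : ℝ} (h : A ≤ s) :
    ∫ t in A..s, (s - t) ^ (β - 1) = (s - A) ^ β / β := by
  rw [intervalIntegral.integral_comp_sub_left (fun y => y ^ (β - 1)) s, sub_self,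
    integral_rpow (Or.inl (by linarith))]
  rw [Real.zero_rpow (by linarith : β - 1 + 1 ≠ 0), sub_add_cancel, sub_zero]

-- L3: Beta-Gamma relation
lemma auxBetaGamma {α β : ℝ} (hα : 0 < α) (hβ : 0 < β) :
    Real.Gamma α * Real.Gamma β =
      Real.Gamma (α + β) * ∫ u in (0:ℝ)..1, u ^ (β - 1) * (1 - u) ^ (α - 1) := by
  have hbeta : Complex.betaIntegral (β:ℂ) (α:ℂ)
      = ((∫ u in (0:ℝ)..1, u ^ (β - 1) * (1 - u) ^ (α - 1) : ℝ) : ℂ) := by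
    rw [Complex.betaIntegral, ← intervalIntegral.integral_ofReal]
    apply intervalIntegral.integral_congr
    intro u hu
    rw [uIcc_of_le (zero_le_one)] at hu
    push_cast
    rw [Complex.ofReal_cpow hu.1, Complex.ofReal_cpow (by linarith [hu.2] : (0:ℝ) ≤ 1 - u)]
    push_cast
    ring
  have hc := Complex.Gamma_mul_Gamma_eq_betaIntegral
    (s := (β:ℂ)) (t := (α:ℂ)) (by simpa using hβ) (by simpa using hα)
  rw [hbeta, ← Complex.ofReal_add, Complex.Gamma_ofReal, Complex.Gamma_ofReal,
    Complex.Gamma_ofReal, ← Complex.ofReal_mul, ← Complex.ofReal_mul] at hc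
  have := Complex.ofReal_injective hc
  rw [add_comm β α] at this
  linarith [this]

-- L2: beta evaluation
lemma auxBetaEval {α β : ℝ} (hα : 0 < α) (hβ : 0 < β) {t X : ℝ} (h : t < X) :
    ∫ s in t..X, (X - s) ^ (α - 1) * (s - t) ^ (β - 1) =
      (X - t) ^ (α + β - 1) * ∫ u in (0:ℝ)..1, u ^ (β - 1) * (1 - u) ^ (α - 1) := by
  have hc : (0:ℝ) < X - t := by linarith
  have key := intervalIntegral.integral_comp_mul_add (a := (0:ℝ)) (b := 1)
    (fun s => (X - s) ^ (α - 1) * (s - t) ^ (β - 1)) hc.ne' t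
  simp only [mul_zero, zero_add, mul_one, sub_add_cancel, smul_eq_mul] at key
  -- key : ∫ u in 0..1, f ((X-t)*u + t) = (X-t)⁻¹ * ∫ s in t..X, f s
  have h2 : ∀ u ∈ uIcc (0:ℝ) 1,
      (X - ((X - t) * u + t)) ^ (α - 1) * ((X - t) * u + t - t) ^ (β - 1)
        = ((X - t) ^ (α - 1) * (X - t) ^ (β - 1)) * (u ^ (β - 1) * (1 - u) ^ (α - 1)) := by
    intro u hu
    rw [uIcc_of_le zero_le_one] at hu
    have e1 : X - ((X - t) * u + t) = (X - t) * (1 - u) := by ring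
    have e2 : (X - t) * u + t - t = (X - t) * u := by ring
    rw [e1, e2, Real.mul_rpow hc.le (by linarith [hu.2]), Real.mul_rpow hc.le hu.1]
    ring
  rw [intervalIntegral.integral_congr h2, intervalIntegral.integral_const_mul] at key
  have : (∫ s in t..X, (X - s) ^ (α - 1) * (s - t) ^ (β - 1))
      = (X - t) * (((X - t) ^ (α - 1) * (X - t) ^ (β - 1)) * ∫ u in (0:ℝ)..1, u ^ (β - 1) * (1 - u) ^ (α - 1)) := by
    rw [key]; field_simp
  rw [this, show α + β - 1 = 1 + ((α - 1) + (β - 1)) by ring,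
    Real.rpow_add hc, Real.rpow_add hc, Real.rpow_one]
  ring

lemma auxSubst {ρ a x : ℝ} (hρ : 0 < ρ) (ha : 0 < a) (hax : a ≤ x) (g : ℝ → ℝ) :
    (∫ σ in a..x, σ ^ (ρ - 1) * g (σ ^ ρ)) = ρ⁻¹ * ∫ s in a ^ ρ..x ^ ρ, g s := by
  have hAX : a ^ ρ ≤ x ^ ρ := Real.rpow_le_rpow ha.le hax hρ.le
  have hA0 : (0:ℝ) < a ^ ρ := Real.rpow_pos_of_pos ha ρ
  have himg : (fun σ : ℝ => σ ^ ρ) '' Ioo a x = Ioo (a ^ ρ) (x ^ ρ) := by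
    apply Subset.antisymm
    · rintro - ⟨σ, hσ, rfl⟩
      exact ⟨Real.rpow_lt_rpow ha.le hσ.1 hρ, Real.rpow_lt_rpow (ha.trans hσ.1).le hσ.2 hρ⟩
    · rintro s ⟨h1, h2⟩
      have hs : 0 < s := hA0.trans h1
      refine ⟨s ^ ρ⁻¹, ⟨?_, ?_⟩, Real.rpow_inv_rpow hs.le hρ.ne'⟩
      · have := Real.rpow_lt_rpow hA0.le h1 (inv_pos.mpr hρ)
        rwa [Real.rpow_rpow_inv ha.le hρ.ne'] at this
      · have := Real.rpow_lt_rpow hs.le h2 (inv_pos.mpr hρ)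
        rwa [Real.rpow_rpow_inv (ha.trans_le hax).le hρ.ne'] at this
  have hderiv : ∀ σ ∈ Ioo a x, HasDerivWithinAt (fun σ : ℝ => σ ^ ρ)
      (ρ * σ ^ (ρ - 1)) (Ioo a x) σ := fun σ hσ =>
    (Real.hasDerivAt_rpow_const (Or.inl (ha.trans hσ.1).ne')).hasDerivWithinAt
  have hinj : InjOn (fun σ : ℝ => σ ^ ρ) (Ioo a x) := by
    intro u hu v hv huv
    have := Real.rpow_left_injOn (x := ρ) hρ.ne'
    exact this (by simp [mem_setOf_eq]; linarith [hu.1, ha] : u ∈ {y : ℝ | 0 ≤ y})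
      (by simp [mem_setOf_eq]; linarith [hv.1, ha]) huv
  have key := integral_image_eq_integral_abs_deriv_smul measurableSet_Ioo hderiv hinj g
  rw [himg] at key
  have h2 : ∫ σ in Ioo a x, |ρ * σ ^ (ρ - 1)| • g (σ ^ ρ)
      = ρ * ∫ σ in Ioo a x, σ ^ (ρ - 1) * g (σ ^ ρ) := by
    rw [← integral_const_mul]
    apply setIntegral_congr_fun measurableSet_Ioo
    intro σ hσ
    have : 0 < ρ * σ ^ (ρ - 1) := mul_pos hρ (Real.rpow_pos_of_pos (ha.trans hσ.1) _)
    simp only [smul_eq_mul]; rw [abs_of_pos this]; ring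
  rw [intervalIntegral.integral_of_le hax, intervalIntegral.integral_of_le hAX,
    integral_Ioc_eq_integral_Ioo, integral_Ioc_eq_integral_Ioo, key, h2,
    inv_mul_cancel_left₀ hρ.ne']

lemma auxReduce {ρ a x : ℝ} (hρ : 0 < ρ) (ha : 0 < a) (hax : a ≤ x) (γ : ℝ) (h : ℝ → ℝ) :
    genIntL ρ γ a h x
      = ρ ^ (-γ) / Real.Gamma γ * ∫ s in a ^ ρ..x ^ ρ, h (s ^ ρ⁻¹) * (x ^ ρ - s) ^ (γ - 1) := by
  unfold genIntL
  have h1 : ∀ τ ∈ uIcc a x, τ ^ (ρ - 1) * h τ * (x ^ ρ - τ ^ ρ) ^ (γ - 1)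
      = τ ^ (ρ - 1) * (h ((τ ^ ρ) ^ ρ⁻¹) * (x ^ ρ - τ ^ ρ) ^ (γ - 1)) := by
    intro τ hτ
    rw [uIcc_of_le hax] at hτ
    rw [Real.rpow_rpow_inv (ha.trans_le hτ.1).le hρ.ne']
    ring
  rw [intervalIntegral.integral_congr h1,
    auxSubst hρ ha hax (fun s => h (s ^ ρ⁻¹) * (x ^ ρ - s) ^ (γ - 1)), ← mul_assoc]
  congr 1
  rw [div_mul_eq_mul_div]
  congr 1
  rw [← Real.rpow_neg_one ρ, ← Real.rpow_add hρ]
  norm_num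
  ring_nf

lemma auxRL {A X α β : ℝ} (hα : 0 < α) (hβ : 0 < β) (hAX : A < X)
    {G : ℝ → ℝ} (hG : Continuous G) :
    Real.Gamma (α + β) * ∫ s in A..X, (X - s) ^ (α - 1) * ∫ t in A..s, G t * (s - t) ^ (β - 1) =
      Real.Gamma α * Real.Gamma β * ∫ t in A..X, G t * (X - t) ^ (α + β - 1) := by
  obtain ⟨C, hC0, hC⟩ : ∃ C : ℝ, 0 ≤ C ∧ ∀ t ∈ Icc A X, |G t| ≤ C := by
    obtain ⟨C, hC⟩ := (isCompact_Icc (a := A) (b := X)).exists_bound_of_continuousOn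
      hG.continuousOn
    exact ⟨max C 0, le_max_right _ _,
      fun t ht => le_trans (by simpa using hC t ht) (le_max_left _ _)⟩
  set μ := volume.restrict (Ioo A X) with hμ
  set K : ℝ → ℝ → ℝ :=
    fun s t => if t < s then (X - s) ^ (α - 1) * (G t * (s - t) ^ (β - 1)) else 0 with hK
  -- measurability
  have hKm : Measurable (Function.uncurry K) := by
    apply Measurable.ite (measurableSet_lt measurable_snd measurable_fst) ?_ measurable_const
    fun_prop
  -- integrability in t for fixed s
  have hInt : ∀ s : ℝ, IntervalIntegrable (fun t => G t * (s - t) ^ (β - 1)) volume A s :=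
    fun s => (auxIntLeft hβ s A s).continuousOn_mul hG.continuousOn
  -- indicator forms
  have hKind : ∀ s : ℝ, (fun t => K s t)
      = (Iio s).indicator (fun t => (X - s) ^ (α - 1) * (G t * (s - t) ^ (β - 1))) := by
    intro s; funext t; simp [hK, indicator_apply]
  have hKind2 : ∀ t : ℝ, (fun s => K s t)
      = (Ioi t).indicator (fun s => (X - s) ^ (α - 1) * (G t * (s - t) ^ (β - 1))) := by
    intro t; funext s; simp [hK, indicator_apply]
  have hIio : ∀ s ∈ Ioo A X, Iio s ∩ Ioo A X = Ioo A s := by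
    intro s hs; ext t
    simp only [mem_inter_iff, mem_Iio, mem_Ioo]
    exact ⟨fun ⟨h1, h2, _⟩ => ⟨h2, h1⟩, fun ⟨h1, h2⟩ => ⟨h2, h1, h2.trans hs.2⟩⟩
  have hIoi : ∀ t ∈ Ioo A X, Ioi t ∩ Ioo A X = Ioo t X := by
    intro t ht; ext s
    simp only [mem_inter_iff, mem_Ioi, mem_Ioo]
    exact ⟨fun ⟨h1, _, h3⟩ => ⟨h1, h3⟩, fun ⟨h1, h2⟩ => ⟨h1, ht.1.trans h1, h2⟩⟩
  -- integrability of K s · over μ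
  have hres : ∀ s ∈ Ioo A X, Integrable (fun t => K s t) μ := by
    intro s hs
    rw [hKind s, hμ, integrable_indicator_iff measurableSet_Iio, IntegrableOn,
      Measure.restrict_restrict measurableSet_Iio, hIio s hs]
    exact (((hInt s).1.mono_set Ioo_subset_Ioc_self).const_mul _)
  -- value of inner integral in t
  have hval1 : ∀ s ∈ Ioo A X,
      ∫ t, K s t ∂μ = (X - s) ^ (α - 1) * ∫ t in A..s, G t * (s - t) ^ (β - 1) := by
    intro s hs
    rw [hKind s, hμ, integral_indicator measurableSet_Iio,
      Measure.restrict_restrict measurableSet_Iio, hIio s hs, integral_const_mul,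
      intervalIntegral.integral_of_le hs.1.le, integral_Ioc_eq_integral_Ioo]
  -- value of inner integral in s
  have hval2 : ∀ t ∈ Ioo A X,
      ∫ s, K s t ∂μ = G t * ((X - t) ^ (α + β - 1)
        * ∫ u in (0:ℝ)..1, u ^ (β - 1) * (1 - u) ^ (α - 1)) := by
    intro t ht
    rw [hKind2 t, hμ, integral_indicator measurableSet_Ioi,
      Measure.restrict_restrict measurableSet_Ioi, hIoi t ht]
    have : ∀ s ∈ Ioo t X, (X - s) ^ (α - 1) * (G t * (s - t) ^ (β - 1))
        = G t * ((X - s) ^ (α - 1) * (s - t) ^ (β - 1)) := fun s _ => by ring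
    rw [setIntegral_congr_fun measurableSet_Ioo this, integral_const_mul,
      ← integral_Ioc_eq_integral_Ioo, ← intervalIntegral.integral_of_le ht.2.le,
      auxBetaEval hα hβ ht.2]
  -- the second Fubini condition
  have hbound : Integrable (fun s => ∫ t, ‖K s t‖ ∂μ) μ := by
    refine Integrable.mono' (g := fun s => C * (X - A) ^ β / β * (X - s) ^ (α - 1))
      (((auxIntLeft hα X A X).1.mono_set Ioo_subset_Ioc_self).const_mul _)
      ?_ ?_
    · exact hKm.norm.aestronglyMeasurable.integral_prod_right'
    rw [hμ, ae_restrict_iff' measurableSet_Ioo]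
    refine ae_of_all _ fun s hs => ?_
    have hXs : (0:ℝ) ≤ (X - s) ^ (α - 1) := Real.rpow_nonneg (by linarith [hs.2]) _
    have step1 : ∫ t, ‖K s t‖ ∂μ
        = ∫ t in Ioo A s, ‖(X - s) ^ (α - 1) * (G t * (s - t) ^ (β - 1))‖ := by
      have e : (fun t => ‖K s t‖) = (Iio s).indicator
          (fun t => ‖(X - s) ^ (α - 1) * (G t * (s - t) ^ (β - 1))‖) := by
        funext t
        rw [show K s t = (Iio s).indicator
            (fun t => (X - s) ^ (α - 1) * (G t * (s - t) ^ (β - 1))) t from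
          congrFun (hKind s) t, norm_indicator_eq_indicator_norm]
      rw [e, hμ, integral_indicator measurableSet_Iio,
        Measure.restrict_restrict measurableSet_Iio, hIio s hs]
    have step2 : ∫ t in Ioo A s, ‖(X - s) ^ (α - 1) * (G t * (s - t) ^ (β - 1))‖
        ≤ ∫ t in Ioo A s, (X - s) ^ (α - 1) * (C * (s - t) ^ (β - 1)) := by
      apply setIntegral_mono_on
      · have := ((hInt s).1.mono_set Ioo_subset_Ioc_self).const_mul ((X - s) ^ (α - 1))
        exact this.norm
      · exact (((auxIntLeft hβ s A s).1.mono_set Ioo_subset_Ioc_self).const_mul C).const_mul _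
      · exact measurableSet_Ioo
      · intro t ht
        have hst : (0:ℝ) ≤ (s - t) ^ (β - 1) := Real.rpow_nonneg (by linarith [ht.2]) _
        rw [norm_mul, norm_mul, Real.norm_eq_abs, Real.norm_eq_abs, Real.norm_eq_abs,
          abs_of_nonneg hXs, abs_of_nonneg hst]
        apply mul_le_mul_of_nonneg_left _ hXs
        exact mul_le_mul_of_nonneg_right (hC t ⟨ht.1.le, (ht.2.trans hs.2).le⟩) hst
    have step3 : ∫ t in Ioo A s, (X - s) ^ (α - 1) * (C * (s - t) ^ (β - 1))
        = (X - s) ^ (α - 1) * (C * ((s - A) ^ β / β)) := by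
      rw [integral_const_mul, integral_const_mul, ← integral_Ioc_eq_integral_Ioo,
        ← intervalIntegral.integral_of_le hs.1.le, auxIntVal hβ hs.1.le]
    have step4 : (X - s) ^ (α - 1) * (C * ((s - A) ^ β / β))
        ≤ C * (X - A) ^ β / β * (X - s) ^ (α - 1) := by
      rw [show C * (X - A) ^ β / β * (X - s) ^ (α - 1)
        = (X - s) ^ (α - 1) * (C * ((X - A) ^ β / β)) by ring]
      apply mul_le_mul_of_nonneg_left _ hXs
      apply mul_le_mul_of_nonneg_left _ hC0
      have hpow : (s - A) ^ β ≤ (X - A) ^ β :=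
        Real.rpow_le_rpow (by linarith [hs.1]) (by linarith [hs.2]) hβ.le
      gcongr
    have hnn : (0:ℝ) ≤ ∫ t, ‖K s t‖ ∂μ := integral_nonneg fun t => norm_nonneg _
    rw [Real.norm_eq_abs, abs_of_nonneg hnn]
    calc ∫ t, ‖K s t‖ ∂μ ≤ (X - s) ^ (α - 1) * (C * ((s - A) ^ β / β)) := by
            rw [step1, ← step3]; exact step2
      _ ≤ _ := step4
  -- full integrability on the product
  have hKint : Integrable (Function.uncurry K) (μ.prod μ) := by
    rw [integrable_prod_iff hKm.aestronglyMeasurable]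
    constructor
    · rw [hμ, ae_restrict_iff' measurableSet_Ioo]
      exact ae_of_all _ hres
    · exact hbound
  have hswap := integral_integral_swap hKint
  -- assemble
  have lhs_eq : (∫ s in A..X, (X - s) ^ (α - 1) * ∫ t in A..s, G t * (s - t) ^ (β - 1))
      = ∫ s, ∫ t, K s t ∂μ ∂μ := by
    rw [intervalIntegral.integral_of_le hAX.le, integral_Ioc_eq_integral_Ioo]
    exact (setIntegral_congr_fun measurableSet_Ioo fun s hs => (hval1 s hs).symm)
  have rhs_eq : ∫ t, ∫ s, K s t ∂μ ∂μ
      = (∫ u in (0:ℝ)..1, u ^ (β - 1) * (1 - u) ^ (α - 1))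
        * ∫ t in A..X, G t * (X - t) ^ (α + β - 1) := by
    rw [intervalIntegral.integral_of_le hAX.le, integral_Ioc_eq_integral_Ioo,
      ← integral_const_mul, hμ]
    apply setIntegral_congr_fun measurableSet_Ioo
    intro t ht
    have h2 := hval2 t ht
    rw [hμ] at h2
    dsimp only
    rw [h2]; ring
  rw [lhs_eq, hswap, rhs_eq, auxBetaGamma hα hβ]
  ring

/-- Semigroup property of generalized fractional integrals (Proposition 2.1, item 1). -/
theorem genInt_semigroup (ρ a b α β : ℝ) (f : ℝ → ℝ)
    (hρ : 0 < ρ) (ha : 0 < a) (hab : a < b) (hα : 0 < α) (hβ : 0 < β)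
    (hf : ContinuousOn f (Set.Icc a b)) :
    ∀ x ∈ Set.Ioc a b,
      genIntL ρ α a (genIntL ρ β a f) x = genIntL ρ (α + β) a f x := by
  -- extend f to a globally continuous function
  obtain ⟨F, hFc, hFf⟩ : ∃ F : ℝ → ℝ, Continuous F ∧ ∀ τ ∈ Icc a b, F τ = f τ := by
    obtain ⟨g, hg⟩ := ContinuousMap.exists_restrict_eq (isClosed_Icc (a := a) (b := b))
      ⟨_, continuousOn_iff_continuous_restrict.mp hf⟩
    refine ⟨g, g.continuous, fun τ hτ => ?_⟩
    have := congrFun (congrArg ContinuousMap.toFun hg) ⟨τ, hτ⟩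
    simpa using this
  intro x hx
  have hax : a ≤ x := hx.1.le
  have hrepl : ∀ γ : ℝ, ∀ y : ℝ, a ≤ y → y ≤ b → genIntL ρ γ a f y = genIntL ρ γ a F y := by
    intro γ y h1 h2
    unfold genIntL
    congr 1
    apply intervalIntegral.integral_congr
    intro τ hτ
    rw [uIcc_of_le h1] at hτ
    dsimp only
    rw [hFf τ ⟨hτ.1, hτ.2.trans h2⟩]
  have hrepl2 : genIntL ρ α a (genIntL ρ β a f) x = genIntL ρ α a (genIntL ρ β a F) x := by
    unfold genIntL
    congr 1
    apply intervalIntegral.integral_congr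
    intro τ hτ
    rw [uIcc_of_le hax] at hτ
    have := hrepl β τ hτ.1 (hτ.2.trans hx.2)
    unfold genIntL at this
    dsimp only
    rw [this]
  rw [hrepl2, hrepl (α + β) x hax hx.2]
  -- notation
  have hAX : a ^ ρ < x ^ ρ := Real.rpow_lt_rpow ha.le hx.1 hρ
  have hA0 : (0:ℝ) < a ^ ρ := Real.rpow_pos_of_pos ha ρ
  have hGc : Continuous (fun t : ℝ => F (t ^ ρ⁻¹)) :=
    hFc.comp (Real.continuous_rpow_const (inv_pos.mpr hρ).le)
  rw [auxReduce hρ ha hax α (genIntL ρ β a F), auxReduce hρ ha hax (α + β) F]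
  have h3 : ∀ s ∈ uIcc (a ^ ρ) (x ^ ρ),
      genIntL ρ β a F (s ^ ρ⁻¹) * (x ^ ρ - s) ^ (α - 1)
        = ρ ^ (-β) / Real.Gamma β *
          ((x ^ ρ - s) ^ (α - 1) * ∫ t in a ^ ρ..s, F (t ^ ρ⁻¹) * (s - t) ^ (β - 1)) := by
    intro s hs
    rw [uIcc_of_le hAX.le] at hs
    have hs0 : 0 < s := hA0.trans_le hs.1
    have hy : a ≤ s ^ ρ⁻¹ := by
      have := Real.rpow_le_rpow hA0.le hs.1 (inv_pos.mpr hρ).le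
      rwa [Real.rpow_rpow_inv ha.le hρ.ne'] at this
    rw [auxReduce hρ ha hy β F, Real.rpow_inv_rpow hs0.le hρ.ne']
    ring
  rw [intervalIntegral.integral_congr h3, intervalIntegral.integral_const_mul]
  -- final algebra
  have hRL := auxRL hα hβ hAX hGc
  have hΓα := Real.Gamma_pos_of_pos hα
  have hΓβ := Real.Gamma_pos_of_pos hβ
  have hΓαβ := Real.Gamma_pos_of_pos (add_pos hα hβ)
  have hpow : ρ ^ (-α) * ρ ^ (-β) = ρ ^ (-(α + β)) := by
    rw [← Real.rpow_add hρ]; ring_nf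
  set I1 := ∫ s in a ^ ρ..x ^ ρ, (x ^ ρ - s) ^ (α - 1) *
    ∫ t in a ^ ρ..s, F (t ^ ρ⁻¹) * (s - t) ^ (β - 1) with hI1def
  set I2 := ∫ t in a ^ ρ..x ^ ρ, F (t ^ ρ⁻¹) * (x ^ ρ - t) ^ (α + β - 1) with hI2def
  have hI1 : I1 = Real.Gamma α * Real.Gamma β * I2 / Real.Gamma (α + β) := by
    field_simp
    linear_combination hRL
  rw [hI1, ← hpow]
  field_simp
end

section
/- Hadamard limit of the generalized fractional integral (Theorem 2.2, item 2): Let α > 0, 0 < a < x, and let f : ℝ → ℝ be continuous on [a,x]. Then the limit as ρ → 0⁺ of (ρ^{1−α}/Γ(α)) · ∫_a^x τ^{ρ−1} f(τ) (x^ρ − τ^ρ)^{α−1} dτ equals (1/Γ(α)) · ∫_a^x (log(x/τ))^{α−1} f(τ) dτ/τ, i.e. the generalized (Katugampola) fractional integral converges pointwise to the Hadamard fractional integral as ρ → 0⁺. -/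
open Real Set Filter MeasureTheory intervalIntegral

lemma aux_tendsto_slope (x τ : ℝ) (hx : 0 < x) (hτ : 0 < τ) :
    Tendsto (fun ρ : ℝ => (x ^ ρ - τ ^ ρ) / ρ) (nhdsWithin 0 (Set.Ioi 0))
      (nhds (Real.log x - Real.log τ)) := by
  have hg : HasDerivAt (fun ρ : ℝ => x ^ ρ - τ ^ ρ) (Real.log x - Real.log τ) 0 := by
    have h1 := (Real.hasStrictDerivAt_const_rpow hx 0).hasDerivAt
    have h2 := (Real.hasStrictDerivAt_const_rpow hτ 0).hasDerivAt
    exact (h1.sub h2).congr_deriv (by simp)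
  have := hasDerivAt_iff_tendsto_slope.1 hg
  have hmono : nhdsWithin (0:ℝ) (Set.Ioi 0) ≤ nhdsWithin 0 {0}ᶜ :=
    nhdsWithin_mono _ (fun t ht => ne_of_gt ht)
  refine (this.mono_left hmono).congr' ?_
  filter_upwards [self_mem_nhdsWithin] with ρ (hρ : 0 < ρ)
  simp [slope_def_field, Real.rpow_zero, div_eq_mul_inv, mul_comm]

lemma aux_le_max (a t ρ : ℝ) (ha : 0 < a) (hat : a ≤ t) (hρ : ρ ∈ Set.Ioo (0:ℝ) 1) :
    t ^ (ρ - 1) ≤ max a⁻¹ 1 := by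
  have hexp : ρ - 1 ≤ 0 := by linarith [hρ.2]
  have h1 : t ^ (ρ - 1) ≤ a ^ (ρ - 1) := Real.rpow_le_rpow_of_nonpos ha hat hexp
  refine h1.trans ?_
  rcases le_or_gt a 1 with ha1 | ha1
  · have : a ^ (ρ - 1) ≤ a ^ (-1:ℝ) :=
      Real.rpow_le_rpow_of_exponent_ge ha ha1 (by linarith [hρ.1])
    rw [Real.rpow_neg_one] at this
    exact this.trans (le_max_left _ _)
  · have h0 : a ^ (ρ - 1) ≤ a ^ (0:ℝ) := Real.rpow_le_rpow_of_exponent_le ha1.le hexp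
    rw [Real.rpow_zero] at h0
    exact h0.trans (le_max_right _ _)

lemma aux_mvt (a x ρ τ : ℝ) (ha : 0 < a) (hρ : ρ ∈ Set.Ioo (0:ℝ) 1) (hτ : τ ∈ Set.Ioo a x) :
    min x⁻¹ 1 * (x - τ) ≤ (x ^ ρ - τ ^ ρ) / ρ ∧
      (x ^ ρ - τ ^ ρ) / ρ ≤ max a⁻¹ 1 * (x - τ) := by
  have hτ0 : 0 < τ := ha.trans hτ.1
  have hx0 : 0 < x := hτ0.trans hτ.2
  obtain ⟨ξ, hξ, hslope⟩ := exists_hasDerivAt_eq_slope (fun t => t ^ ρ)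
    (fun t => ρ * t ^ (ρ - 1)) hτ.2
    (fun t ht => (Real.continuousAt_rpow_const t ρ
      (Or.inl (ne_of_gt (lt_of_lt_of_le hτ0 ht.1)))).continuousWithinAt)
    (fun t ht => Real.hasDerivAt_rpow_const (Or.inl (ne_of_gt (hτ0.trans ht.1))))
  have hξ0 : 0 < ξ := hτ0.trans hξ.1
  have hxτ : 0 < x - τ := sub_pos.2 hτ.2
  have hρ0 : (0:ℝ) < ρ := hρ.1
  have key : (x ^ ρ - τ ^ ρ) / ρ = ξ ^ (ρ - 1) * (x - τ) := by
    field_simp at hslope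
    rw [← hslope]
    field_simp
  have hexp : ρ - 1 ≤ 0 := by linarith [hρ.2]
  constructor
  · rw [key]
    have h1 : x ^ (ρ - 1) ≤ ξ ^ (ρ - 1) :=
      Real.rpow_le_rpow_of_nonpos hξ0 (le_of_lt hξ.2) hexp
    have h2 : min x⁻¹ 1 ≤ x ^ (ρ - 1) := by
      rcases le_or_gt x 1 with hx1 | hx1
      · have : x ^ (0:ℝ) ≤ x ^ (ρ - 1) :=
          Real.rpow_le_rpow_of_exponent_ge hx0 hx1 hexp
        simpa using (min_le_right x⁻¹ 1).trans (by simpa using this)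
      · have : x ^ (-1:ℝ) ≤ x ^ (ρ - 1) :=
          Real.rpow_le_rpow_of_exponent_le hx1.le (by linarith [hρ.1])
        rw [Real.rpow_neg_one] at this
        exact (min_le_left x⁻¹ 1).trans this
    nlinarith [h1, h2, hxτ]
  · rw [key]
    have h1 : ξ ^ (ρ - 1) ≤ max a⁻¹ 1 :=
      aux_le_max a ξ ρ ha (le_of_lt (lt_trans hτ.1 hξ.1)) hρ
    nlinarith [h1, hxτ, Real.rpow_nonneg hξ0.le (ρ - 1)]

/-- Hadamard limit of the generalized (Katugampola) fractional integral
(Theorem 2.2, item 2): as `ρ → 0⁺` the Katugampola fractional integral of order `α`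
of `f` converges pointwise to the Hadamard fractional integral of order `α` of `f`. -/
theorem katugampola_tendsto_hadamard (α a x : ℝ) (f : ℝ → ℝ)
    (hα : 0 < α) (ha : 0 < a) (hax : a < x)
    (hf : ContinuousOn f (Set.Icc a x)) :
    Filter.Tendsto
      (fun ρ : ℝ => ρ ^ (1 - α) / Real.Gamma α *
        ∫ τ in a..x, τ ^ (ρ - 1) * f τ * (x ^ ρ - τ ^ ρ) ^ (α - 1))
      (nhdsWithin 0 (Set.Ioi 0))
      (nhds (1 / Real.Gamma α * ∫ τ in a..x, Real.log (x / τ) ^ (α - 1) * f τ / τ)) := by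
  have hx0 : 0 < x := ha.trans hax
  obtain ⟨M, hM⟩ := isCompact_Icc.exists_bound_of_continuousOn hf
  set M' : ℝ := max M 0 with hM'def
  have hM'0 : 0 ≤ M' := le_max_right _ _
  have hfM : ∀ τ ∈ Set.Icc a x, |f τ| ≤ M' := fun τ hτ =>
    (hM τ hτ).trans (le_max_left _ _)
  set C : ℝ := max a⁻¹ 1 with hCdef
  set c : ℝ := min x⁻¹ 1 with hcdef
  have hC0 : (0:ℝ) < C := lt_of_lt_of_le one_pos (le_max_right _ _)
  have hc0 : (0:ℝ) < c := lt_min (inv_pos.2 hx0) one_pos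
  set K : ℝ := max (C ^ (α - 1)) (c ^ (α - 1)) with hKdef
  have hK0 : 0 ≤ K := le_trans (Real.rpow_nonneg hC0.le _) (le_max_left _ _)
  set F : ℝ → ℝ → ℝ := fun ρ τ =>
    τ ^ (ρ - 1) * f τ * ((x ^ ρ - τ ^ ρ) / ρ) ^ (α - 1) with hFdef
  set B : ℝ → ℝ := fun τ => C * M' * K * (x - τ) ^ (α - 1) with hBdef
  have hne : ∀ᵐ τ : ℝ, τ ≠ x := by
    rw [MeasureTheory.ae_iff]
    have : {τ : ℝ | ¬ τ ≠ x} = {x} := by ext t; simp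
    rw [this]
    exact Real.volume_singleton
  have hmem_Ioo : ∀ τ : ℝ, τ ∈ Set.uIoc a x → τ ≠ x → τ ∈ Set.Ioo a x := by
    intro τ hτ hτne
    rw [Set.uIoc_of_le hax.le] at hτ
    exact ⟨hτ.1, lt_of_le_of_ne hτ.2 hτne⟩
  -- dominated convergence for the rescaled integrand
  have key : Tendsto (fun ρ => ∫ τ in a..x, F ρ τ) (nhdsWithin 0 (Set.Ioi 0))
      (nhds (∫ τ in a..x, Real.log (x / τ) ^ (α - 1) * f τ / τ)) := by
    refine intervalIntegral.tendsto_integral_filter_of_dominated_convergence B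
      ?_ ?_ ?_ ?_
    · -- measurability
      refine Eventually.of_forall fun ρ => ?_
      have hfm : AEStronglyMeasurable f (volume.restrict (Set.uIoc a x)) := by
        rw [Set.uIoc_of_le hax.le]
        exact ((hf.mono Set.Ioc_subset_Icc_self).aestronglyMeasurable measurableSet_Ioc)
      have m1 : Measurable fun τ : ℝ => τ ^ (ρ - 1) := by fun_prop
      have m2 : Measurable fun τ : ℝ => ((x ^ ρ - τ ^ ρ) / ρ) ^ (α - 1) := by fun_prop
      exact ((m1.aestronglyMeasurable.mul hfm).mul m2.aestronglyMeasurable)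
    · -- bound
      filter_upwards [Ioo_mem_nhdsGT_of_mem (Set.mem_Ico.2 ⟨le_refl (0:ℝ), one_pos⟩)]
        with ρ hρ
      filter_upwards [hne] with τ hτne hτmem
      have hτI : τ ∈ Set.Ioo a x := hmem_Ioo τ hτmem hτne
      have hτ0 : 0 < τ := ha.trans hτI.1
      have hxτ : 0 < x - τ := sub_pos.2 hτI.2
      obtain ⟨hlow, hhigh⟩ := aux_mvt a x ρ τ ha hρ hτI
      have hh0 : 0 < (x ^ ρ - τ ^ ρ) / ρ := lt_of_lt_of_le (by positivity) hlow
      have ht1 : τ ^ (ρ - 1) ≤ C := aux_le_max a τ ρ ha hτI.1.le hρ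
      have ht2 : |f τ| ≤ M' := hfM τ ⟨hτI.1.le, hτI.2.le⟩
      have ht3 : ((x ^ ρ - τ ^ ρ) / ρ) ^ (α - 1) ≤ K * (x - τ) ^ (α - 1) := by
        rcases le_or_gt 1 α with hα1 | hα1
        · have h1 : ((x ^ ρ - τ ^ ρ) / ρ) ^ (α - 1) ≤ (C * (x - τ)) ^ (α - 1) :=
            Real.rpow_le_rpow hh0.le hhigh (by linarith)
          rw [Real.mul_rpow hC0.le hxτ.le] at h1
          exact h1.trans (mul_le_mul_of_nonneg_right (le_max_left _ _)
            (Real.rpow_nonneg hxτ.le _))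
        · have h1 : ((x ^ ρ - τ ^ ρ) / ρ) ^ (α - 1) ≤ (c * (x - τ)) ^ (α - 1) :=
            Real.rpow_le_rpow_of_nonpos (by positivity) hlow (by linarith)
          rw [Real.mul_rpow hc0.le hxτ.le] at h1
          exact h1.trans (mul_le_mul_of_nonneg_right (le_max_right _ _)
            (Real.rpow_nonneg hxτ.le _))
      have habs : ‖F ρ τ‖ =
          τ ^ (ρ - 1) * |f τ| * ((x ^ ρ - τ ^ ρ) / ρ) ^ (α - 1) := by
        rw [Real.norm_eq_abs, abs_mul, abs_mul,
          abs_of_nonneg (Real.rpow_nonneg hτ0.le _),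
          abs_of_nonneg (Real.rpow_nonneg hh0.le _)]
      rw [habs]
      calc τ ^ (ρ - 1) * |f τ| * ((x ^ ρ - τ ^ ρ) / ρ) ^ (α - 1)
          ≤ (C * M') * (K * (x - τ) ^ (α - 1)) := by
            refine mul_le_mul (mul_le_mul ht1 ht2 (abs_nonneg _)
              hC0.le) ht3 (Real.rpow_nonneg hh0.le _) (by positivity)
        _ = B τ := by rw [hBdef]; ring
    · -- integrability of the bound
      have h0 : IntervalIntegrable (fun s : ℝ => s ^ (α - 1)) volume 0 (x - a) :=
        intervalIntegral.intervalIntegrable_rpow' (by linarith)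
      have h1 := h0.comp_sub_left x
      have h2 : IntervalIntegrable (fun τ : ℝ => (x - τ) ^ (α - 1)) volume a x := by
        simpa using h1.symm
      simpa [hBdef, mul_assoc] using h2.const_mul (C * M' * K)
    · -- pointwise limit
      filter_upwards [hne] with τ hτne hτmem
      have hτI : τ ∈ Set.Ioo a x := hmem_Ioo τ hτmem hτne
      have hτ0 : 0 < τ := ha.trans hτI.1
      have T1 : Tendsto (fun ρ : ℝ => τ ^ (ρ - 1)) (nhdsWithin 0 (Set.Ioi 0))
          (nhds τ⁻¹) := by
        have heq : ∀ ρ : ℝ, τ ^ (ρ - 1) = Real.exp (Real.log τ * (ρ - 1)) :=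
          fun ρ => Real.rpow_def_of_pos hτ0 _
        have cont : Continuous fun ρ : ℝ => Real.exp (Real.log τ * (ρ - 1)) := by
          continuity
        have := (cont.tendsto 0).mono_left (nhdsWithin_le_nhds (s := Set.Ioi (0:ℝ)))
        simp only [zero_sub, mul_neg_one, Real.exp_neg, Real.exp_log hτ0] at this
        exact this.congr fun ρ => (heq ρ).symm
      have hlogpos : 0 < Real.log x - Real.log τ :=
        sub_pos.2 (Real.log_lt_log hτ0 hτI.2)
      have T2 : Tendsto (fun ρ : ℝ => ((x ^ ρ - τ ^ ρ) / ρ) ^ (α - 1))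
          (nhdsWithin 0 (Set.Ioi 0))
          (nhds ((Real.log x - Real.log τ) ^ (α - 1))) :=
        (Real.continuousAt_rpow_const _ _ (Or.inl (ne_of_gt hlogpos))).tendsto.comp
          (aux_tendsto_slope x τ hx0 hτ0)
      have Tall := (T1.mul (tendsto_const_nhds (x := f τ))).mul T2
      have hval : τ⁻¹ * f τ * (Real.log x - Real.log τ) ^ (α - 1)
          = Real.log (x / τ) ^ (α - 1) * f τ / τ := by
        rw [Real.log_div (ne_of_gt hx0) (ne_of_gt hτ0)]
        ring
      rw [hval] at Tall
      exact Tall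
  -- transfer back to the original expression
  refine Tendsto.congr' ?_ (key.const_mul (1 / Real.Gamma α))
  filter_upwards [self_mem_nhdsWithin] with ρ (hρ : (0:ℝ) < ρ)
  have hcong : (∫ τ in a..x, F ρ τ)
      = ∫ τ in a..x, ρ ^ (1 - α) * (τ ^ (ρ - 1) * f τ * (x ^ ρ - τ ^ ρ) ^ (α - 1)) := by
    refine intervalIntegral.integral_congr fun τ hτ => ?_
    rw [Set.uIcc_of_le hax.le] at hτ
    have hsub : 0 ≤ x ^ ρ - τ ^ ρ :=
      sub_nonneg.2 (Real.rpow_le_rpow (ha.trans_le hτ.1).le hτ.2 hρ.le)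
    have hd : ((x ^ ρ - τ ^ ρ) / ρ) ^ (α - 1)
        = (x ^ ρ - τ ^ ρ) ^ (α - 1) / ρ ^ (α - 1) := Real.div_rpow hsub hρ.le _
    have hρpow : ρ ^ (1 - α) = (ρ ^ (α - 1))⁻¹ := by
      rw [show (1 - α) = -(α - 1) by ring, Real.rpow_neg hρ.le]
    have hρpow0 : (0:ℝ) < ρ ^ (α - 1) := Real.rpow_pos_of_pos hρ _
    show τ ^ (ρ - 1) * f τ * ((x ^ ρ - τ ^ ρ) / ρ) ^ (α - 1)
      = ρ ^ (1 - α) * (τ ^ (ρ - 1) * f τ * (x ^ ρ - τ ^ ρ) ^ (α - 1))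
    rw [hd, hρpow]
    field_simp
  show (1 / Real.Gamma α) * (∫ τ in a..x, F ρ τ)
    = ρ ^ (1 - α) / Real.Gamma α * ∫ τ in a..x, τ ^ (ρ - 1) * f τ * (x ^ ρ - τ ^ ρ) ^ (α - 1)
  rw [hcong, intervalIntegral.integral_const_mul]
  ring
end
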